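/- Let k be an algebraically closed field of characteristic zero, G a finite group, ε ∈ {+1, −1}, V an irreducible ε-small finite-dimensional representation of G over k, and H a normal subgroup of G. Suppose V contains two non-isomorphic irreducible H-submodules. Then every irreducible H-submodule of V is one-dimensional, the characters of H occurring in V are pairwise distinct (i.e. for every group homomorphism χ : H → kˣ the subspace {v ∈ V : h • v = χ(h) v for all h ∈ H} has dimension at most one), and moreover ε = −1 or dim_k V = 2. -/

import Mathlib

open TensorProduct

namespace SmallRep

variable {k G V : Type*}

section Defs
variable [CommSemiring k] [Monoid G] [AddCommMonoid V] [Module k V]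

def IsSubrep (ρ : Representation k G V) (W : Submodule k V) : Prop :=
  ∀ g : G, ∀ v ∈ W, ρ g v ∈ W

def IsIrred (ρ : Representation k G V) : Prop :=
  Nontrivial V ∧ ∀ W : Submodule k V, IsSubrep ρ W → W = ⊥ ∨ W = ⊤

def SubIrred (ρ : Representation k G V) (W : Submodule k V) : Prop :=
  W ≠ ⊥ ∧ ∀ U : Submodule k V, U ≤ W → IsSubrep ρ U → U = ⊥ ∨ U = W

def TrivOn (ρ : Representation k G V) (W : Submodule k V) : Prop :=
  ∀ g : G, ∀ v ∈ W, ρ g v = v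

/-- The restriction of `ρ` to an invariant subspace, as a representation on `W`. -/
def subRep (ρ : Representation k G V) (W : Submodule k V) (hW : IsSubrep ρ W) :
    Representation k G W where
  toFun g := (ρ g).restrict (fun v hv => hW g v hv)
  map_one' := by ext v; simp [LinearMap.restrict_apply]
  map_mul' g₁ g₂ := by
    ext v
    simp [LinearMap.restrict_apply, map_mul, Module.End.mul_apply]

/-- Two representations are isomorphic (equivariantly linearly equivalent). -/
def RepIso {W₁ W₂ : Type*} [AddCommMonoid W₁] [Module k W₁] [AddCommMonoid W₂] [Module k W₂]
    (ρ₁ : Representation k G W₁) (ρ₂ : Representation k G W₂) : Prop :=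
  ∃ e : W₁ ≃ₗ[k] W₂, ∀ (g : G) (w : W₁), e (ρ₁ g w) = ρ₂ g (e w)

end Defs

section Chars
variable [CommSemiring k] [Group G] [AddCommMonoid V] [Module k V]

/-- The weight space of a character `χ` of a subgroup `K`. -/
def weightSpace (ρ : Representation k G V) (K : Subgroup G) (χ : K →* kˣ) :
    Submodule k V where
  carrier := {v | ∀ h : K, ρ (h : G) v = (χ h : k) • v}
  add_mem' := by
    intro a b ha hb h
    simp [map_add, ha h, hb h, smul_add]
  zero_mem' := by intro h; simp
  smul_mem' := by
    intro c a ha h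
    rw [map_smul, ha h, smul_comm]

/-- Conjugation action of `G` on characters of a normal subgroup `K`. -/
def conjChar {K : Subgroup G} (hK : K.Normal) (g : G) (χ : K →* kˣ) : K →* kˣ :=
  haveI := hK
  χ.comp (MulAut.conjNormal g⁻¹).toMonoidHom

end Chars

section Tensor
variable [CommRing k] [Group G] [AddCommGroup V] [Module k V]

noncomputable def tau (k V : Type*) [CommRing k] [AddCommGroup V] [Module k V] :
    Module.End k (V ⊗[k] V) :=
  (TensorProduct.comm k V V).toLinearMap

noncomputable def Tsq (k V : Type*) [CommRing k] [AddCommGroup V] [Module k V] (ε : ℤ) :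
    Submodule k (V ⊗[k] V) :=
  Module.End.eigenspace (tau k V) (ε : k)

noncomputable def IsSmall (ρ : Representation k G V) (ε : ℤ) : Prop :=
  (IsSubrep (ρ.tprod ρ) (Tsq k V ε) ∧ SubIrred (ρ.tprod ρ) (Tsq k V ε)) ∨
  ∃ W₁ W₂ : Submodule k (V ⊗[k] V),
    IsSubrep (ρ.tprod ρ) W₁ ∧ IsSubrep (ρ.tprod ρ) W₂ ∧
    Disjoint W₁ W₂ ∧ W₁ ⊔ W₂ = Tsq k V ε ∧
    SubIrred (ρ.tprod ρ) W₁ ∧ Module.finrank k W₂ = 1 ∧ TrivOn (ρ.tprod ρ) W₂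

/-- A representation is very small if both its symmetric and alternating squares
are irreducible. -/
noncomputable def VerySmall (ρ : Representation k G V) : Prop :=
  IsIrred ρ ∧ SubIrred (ρ.tprod ρ) (Tsq k V 1) ∧ SubIrred (ρ.tprod ρ) (Tsq k V (-1))

/-- `ρ` is strongly irreducible. -/
def StronglyIrred (ρ : Representation k G V) : Prop :=
  ∀ H : Subgroup G, H.Normal → H.FiniteIndex → ¬ H ≤ Subgroup.center G →
    IsIrred (ρ.comp H.subtype)

/-- `ρ` is `2`-homogeneous monomial. -/
def TwoHomogMonomial (ρ : Representation k G V) : Prop :=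
  ∃ K : Subgroup G, ∃ hK : K.Normal,
    (∀ x y : K, x * y = y * x) ∧
    (∀ χ : K →* kˣ, Module.finrank k (weightSpace ρ K χ) ≤ 1) ∧
    (⨆ χ : K →* kˣ, weightSpace ρ K χ) = ⊤ ∧
    (∀ χ₁ χ₂ χ₃ χ₄ : K →* kˣ,
      weightSpace ρ K χ₁ ≠ ⊥ → weightSpace ρ K χ₂ ≠ ⊥ →
      weightSpace ρ K χ₃ ≠ ⊥ → weightSpace ρ K χ₄ ≠ ⊥ →
      χ₁ ≠ χ₂ → χ₃ ≠ χ₄ →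
      ∃ g : G, ({conjChar hK g χ₁, conjChar hK g χ₂} : Set (K →* kˣ)) = {χ₃, χ₄}) ∧
    (∀ g : G, (∀ χ : K →* kˣ, weightSpace ρ K χ ≠ ⊥ → conjChar hK g χ = χ) ↔ g ∈ K)

/-- `V` carries a nondegenerate quadratic form with respect to which `G` acts by
similitudes. -/
def QuadSimilitude (ρ : Representation k G V) : Prop :=
  ∃ q : QuadraticForm k V, ∃ lam : G →* kˣ,
    LinearMap.BilinForm.Nondegenerate (QuadraticMap.polarBilin q) ∧
    ∀ (g : G) (v : V), q (ρ g v) = (lam g : k) * q v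

/-- External tensor product of two representations. -/
noncomputable def extTensor {G₁ G₂ W₁ W₂ : Type*} [Group G₁] [Group G₂]
    [AddCommMonoid W₁] [Module k W₁] [AddCommMonoid W₂] [Module k W₂]
    (ρ₁ : Representation k G₁ W₁) (ρ₂ : Representation k G₂ W₂) :
    Representation k (G₁ × G₂) (W₁ ⊗[k] W₂) :=
  Representation.tprod (ρ₁.comp (MonoidHom.fst G₁ G₂)) (ρ₂.comp (MonoidHom.snd G₁ G₂))

end Tensor

section Groups

/-- A finite `p`-group is extraspecial if its center equals its commutator subgroup,
has order `p`, and the central quotient is a nontrivial elementary abelian `p`-group. -/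
def IsExtraspecial (p : ℕ) (E : Type*) [Group E] : Prop :=
  Subgroup.center E = commutator E ∧ Nat.card (Subgroup.center E) = p ∧
  Nontrivial (E ⧸ Subgroup.center E) ∧
  (∀ x y : E ⧸ Subgroup.center E, x * y = y * x) ∧
  (∀ x : E ⧸ Subgroup.center E, x ^ p = 1)

/-- A group is quasisimple if it is perfect and its central quotient is a
non-abelian simple group. -/
def IsQuasisimple (H : Type*) [Group H] : Prop :=
  commutator H = ⊤ ∧ IsSimpleGroup (H ⧸ Subgroup.center H) ∧
  ∃ x y : H ⧸ Subgroup.center H, x * y ≠ y * x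

end Groups


/-! ### Auxiliary lemmas -/

section Aux1
variable {k G V : Type*} [Field k] [Group G] [AddCommGroup V] [Module k V]
variable (σ : Representation k G V)

lemma isSubrep_inf {P Q : Submodule k V} (hP : IsSubrep σ P) (hQ : IsSubrep σ Q) :
    IsSubrep σ (P ⊓ Q) := fun g v hv => ⟨hP g v hv.1, hQ g v hv.2⟩

lemma isSubrep_iSup {ι : Sort*} (S : ι → Submodule k V) (h : ∀ i, IsSubrep σ (S i)) :
    IsSubrep σ (⨆ i, S i) := by
  intro g v hv
  refine Submodule.iSup_induction S (motive := fun x => σ g x ∈ ⨆ i, S i) hv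
    (fun i x hx => Submodule.mem_iSup_of_mem i (h i g x hx)) (by simp)
    (fun x y hx hy => by
      show σ g (x + y) ∈ ⨆ i, S i
      rw [map_add]; exact add_mem hx hy)

lemma isSubrep_sup {P Q : Submodule k V} (hP : IsSubrep σ P) (hQ : IsSubrep σ Q) :
    IsSubrep σ (P ⊔ Q) := by
  intro g v hv
  rcases Submodule.mem_sup.1 hv with ⟨p, hp, q, hq, rfl⟩
  rw [map_add]
  exact Submodule.add_mem_sup (hP g p hp) (hQ g q hq)

variable {σ}

lemma RepIso.refl {W : Type*} [AddCommGroup W] [Module k W] (ρ₁ : Representation k G W) :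
    RepIso ρ₁ ρ₁ := ⟨LinearEquiv.refl k W, fun _ _ => rfl⟩

lemma RepIso.symm {W₁ W₂ : Type*} [AddCommGroup W₁] [Module k W₁] [AddCommGroup W₂] [Module k W₂]
    {ρ₁ : Representation k G W₁} {ρ₂ : Representation k G W₂} (h : RepIso ρ₁ ρ₂) :
    RepIso ρ₂ ρ₁ := by
  obtain ⟨e, he⟩ := h
  refine ⟨e.symm, fun g w => ?_⟩
  have := he g (e.symm w)
  rw [e.apply_symm_apply] at this
  rw [← this, e.symm_apply_apply]

lemma RepIso.trans {W₁ W₂ W₃ : Type*} [AddCommGroup W₁] [Module k W₁] [AddCommGroup W₂]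
    [Module k W₂] [AddCommGroup W₃] [Module k W₃]
    {ρ₁ : Representation k G W₁} {ρ₂ : Representation k G W₂} {ρ₃ : Representation k G W₃}
    (h : RepIso ρ₁ ρ₂) (h' : RepIso ρ₂ ρ₃) : RepIso ρ₁ ρ₃ := by
  obtain ⟨e, he⟩ := h; obtain ⟨f, hf⟩ := h'
  exact ⟨e.trans f, fun g w => by simp [he g w, hf g (e w)]⟩

lemma RepIso.finrank_eq {W₁ W₂ : Type*} [AddCommGroup W₁] [Module k W₁] [AddCommGroup W₂]
    [Module k W₂] {ρ₁ : Representation k G W₁} {ρ₂ : Representation k G W₂}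
    (h : RepIso ρ₁ ρ₂) : Module.finrank k W₁ = Module.finrank k W₂ := by
  obtain ⟨e, -⟩ := h; exact e.finrank_eq

@[simp] lemma subRep_apply {W : Submodule k V} (hW : IsSubrep σ W) (g : G) (w : W) :
    (subRep σ W hW g w : V) = σ g (w : V) := rfl

/-- A submodule contained in the span of a single vector is `⊥` or everything. -/
lemma le_span_singleton_cases {x : V} {U : Submodule k V}
    (hU : U ≤ Submodule.span k {x}) (hne : U ≠ ⊥) : U = Submodule.span k {x} := by
  obtain ⟨u, hu, hu0⟩ := Submodule.exists_mem_ne_zero_of_ne_bot hne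
  obtain ⟨c, rfl⟩ := Submodule.mem_span_singleton.1 (hU hu)
  have hc : c ≠ 0 := fun h => hu0 (by simp [h])
  refine le_antisymm hU ?_
  rw [Submodule.span_singleton_le_iff_mem]
  have : c⁻¹ • (c • x) ∈ U := Submodule.smul_mem _ _ hu
  rwa [smul_smul, inv_mul_cancel₀ hc, one_smul] at this

/-- A line spanned by a weight vector is an invariant subspace. -/
lemma isSubrep_span_weight {v : V} {c : G → k} (hv : ∀ h, σ h v = c h • v) :
    IsSubrep σ (Submodule.span k {v}) := by
  intro g w hw
  obtain ⟨a, rfl⟩ := Submodule.mem_span_singleton.1 hw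
  rw [map_smul, hv g, smul_smul]
  exact Submodule.smul_mem _ _ (Submodule.mem_span_singleton_self v)

lemma subIrred_span {v : V} (hv : v ≠ 0) : SubIrred σ (Submodule.span k {v}) := by
  refine ⟨by simpa using hv, fun U hU _ => ?_⟩
  by_cases h : U = ⊥
  · exact Or.inl h
  · exact Or.inr (le_span_singleton_cases hU h)

/-- Two weight lines with the same scalar character are isomorphic subrepresentations. -/
lemma repIso_span_of_same_char {v₁ v₂ : V} (h₁ : v₁ ≠ 0) (h₂ : v₂ ≠ 0) {c : G → k}
    (hv₁ : ∀ h, σ h v₁ = c h • v₁) (hv₂ : ∀ h, σ h v₂ = c h • v₂)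
    (hs₁ : IsSubrep σ (Submodule.span k {v₁})) (hs₂ : IsSubrep σ (Submodule.span k {v₂})) :
    RepIso (subRep σ _ hs₁) (subRep σ _ hs₂) := by
  let e₁ := LinearEquiv.toSpanNonzeroSingleton k V v₁ h₁
  let e₂ := LinearEquiv.toSpanNonzeroSingleton k V v₂ h₂
  refine ⟨e₁.symm.trans e₂, fun g w => ?_⟩
  obtain ⟨a, rfl⟩ := e₁.surjective w
  have h1 : ∀ (a : k), e₁ a = a • v₁ := fun a => rfl
  have key : subRep σ _ hs₁ g (e₁ a) = e₁ ((c g) * a) := by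
    ext
    simp only [subRep_apply]
    rw [h1, h1, map_smul, hv₁ g, smul_smul, mul_comm]
  rw [key]
  simp only [LinearEquiv.trans_apply, LinearEquiv.symm_apply_apply]
  ext
  have h2 : ∀ (a : k), ((e₂ a : Submodule.span k {v₂}) : V) = a • v₂ := fun a => rfl
  simp only [subRep_apply, h2]
  rw [map_smul, hv₂ g, smul_smul, mul_comm]

/-- An equivariant map which is nonzero somewhere on an irreducible `Y`, mapping `Y` into an
irreducible `Z`, induces an isomorphism. -/
lemma repIso_of_hom {Y Z : Submodule k V} (hYs : IsSubrep σ Y) (hYirr : SubIrred σ Y)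
    (hZs : IsSubrep σ Z) (hZirr : SubIrred σ Z) (f : V →ₗ[k] V)
    (hmap : ∀ y ∈ Y, f y ∈ Z)
    (hequiv : ∀ (h : G), ∀ y ∈ Y, f (σ h y) = σ h (f y))
    (hne : ∃ y ∈ Y, f y ≠ 0) :
    RepIso (subRep σ Y hYs) (subRep σ Z hZs) := by
  classical
  -- kernel inside Y
  set K := Y ⊓ LinearMap.ker f with hK
  have hKsub : IsSubrep σ K := by
    intro g v hv
    exact ⟨hYs g v hv.1, by simp [LinearMap.mem_ker, hequiv g v hv.1,
      LinearMap.mem_ker.1 hv.2]⟩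
  have hKbot : K = ⊥ := by
    rcases hYirr.2 K inf_le_left hKsub with h | h
    · exact h
    · exfalso; obtain ⟨y, hy, hy0⟩ := hne
      have : y ∈ K := h ▸ hy
      exact hy0 (LinearMap.mem_ker.1 this.2)
  -- image
  set I := Submodule.map f Y with hI
  have hIZ : I ≤ Z := by
    rintro _ ⟨y, hy, rfl⟩; exact hmap y hy
  have hIsub : IsSubrep σ I := by
    rintro g _ ⟨y, hy, rfl⟩
    exact ⟨σ g y, hYs g y hy, hequiv g y hy⟩
  have hIZeq : I = Z := by
    rcases hZirr.2 I hIZ hIsub with h | h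
    · exfalso; obtain ⟨y, hy, hy0⟩ := hne
      have : f y ∈ I := Submodule.mem_map_of_mem (f := f) hy
      rw [h] at this
      exact hy0 (by simpa using this)
    · exact h
  -- build the equivalence
  let g0 : Y →ₗ[k] Z := (f.comp Y.subtype).codRestrict Z (fun y => hmap y y.2)
  have hg0 : ∀ y : Y, (g0 y : V) = f y := fun y => rfl
  have hinj : Function.Injective g0 := by
    intro a b hab
    have : f ((a : V) - b) = 0 := by
      rw [map_sub, sub_eq_zero]
      have := congrArg (Subtype.val) hab
      simpa [hg0] using this
    have hmem : ((a : V) - b) ∈ K := ⟨sub_mem a.2 b.2, LinearMap.mem_ker.2 this⟩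
    rw [hKbot] at hmem
    exact Subtype.ext (by simpa [sub_eq_zero] using hmem)
  have hsurj : Function.Surjective g0 := by
    intro z
    have : (z : V) ∈ I := hIZeq ▸ z.2
    obtain ⟨y, hy, hyz⟩ := this
    exact ⟨⟨y, hy⟩, Subtype.ext (by simp [hg0, hyz])⟩
  refine ⟨LinearEquiv.ofBijective g0 ⟨hinj, hsurj⟩, fun g w => ?_⟩
  ext
  simp only [LinearEquiv.ofBijective_apply, hg0, subRep_apply]
  exact hequiv g w w.2

lemma exists_finrank_one_dim1 {C : Submodule k V} [FiniteDimensional k C]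
    (hC : Module.finrank k C = 1) {u u' : V} (hu : u ∈ C) (hu0 : u ≠ 0) (hu' : u' ∈ C) :
    ∃ c : k, u' = c • u := by
  have hsp : Submodule.span k {u} = C := by
    refine Submodule.eq_of_le_of_finrank_le ((Submodule.span_singleton_le_iff_mem u C).2 hu) ?_
    rw [hC, finrank_span_singleton hu0]
  rw [← hsp] at hu'
  obtain ⟨c, hc⟩ := Submodule.mem_span_singleton.1 hu'
  exact ⟨c, hc.symm⟩

lemma exists_linearIndependent_pair_of_two_le_finrank {P : Submodule k V}
    [FiniteDimensional k P] (h : 2 ≤ Module.finrank k P) :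
    ∃ x y : V, x ∈ P ∧ y ∈ P ∧ LinearIndependent k ![x, y] := by
  let b := Module.finBasis k P
  have h01 : (⟨0, by omega⟩ : Fin (Module.finrank k P)) ≠ ⟨1, by omega⟩ := by
    simp [Fin.ext_iff]
  set x := b ⟨0, by omega⟩
  set y := b ⟨1, by omega⟩
  have hxy : LinearIndependent k ![(x : V), (y : V)] := by
    have hpair : LinearIndependent k ![x, y] := by
      have := b.linearIndependent
      have hinj : Function.Injective (![(⟨0, by omega⟩ : Fin (Module.finrank k P)), ⟨1, by omega⟩]) := by
        intro i j hij
        fin_cases i <;> fin_cases j <;> simp_all <;> omega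
      have := this.comp _ hinj
      convert this using 1
      ext i; fin_cases i <;> rfl
    have := hpair.map' P.subtype (Submodule.ker_subtype P)
    convert this using 1
    ext i; fin_cases i <;> rfl
    rfl
  exact ⟨x, y, x.2, y.2, hxy⟩

/-- Dual functionals to a finite linearly independent family. -/
lemma exists_dual_family {m : ℕ} {v : Fin m → V} (hv : LinearIndependent k v) :
    ∃ f : Fin m → (V →ₗ[k] k), ∀ i j, f i (v j) = if j = i then 1 else 0 := by
  classical
  have hs : LinearIndepOn k id (Set.range v) := hv.linearIndepOn_id
  let b := Module.Basis.extend hs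
  have hmem : ∀ i, v i ∈ hs.extend (Set.subset_univ _) :=
    fun i => Module.Basis.subset_extend hs ⟨i, rfl⟩
  refine ⟨fun i => b.coord ⟨v i, hmem i⟩, fun i j => ?_⟩
  have : v j = b ⟨v j, hmem j⟩ := (Module.Basis.extend_apply_self hs ⟨v j, hmem j⟩).symm
  rw [this, Module.Basis.coord_apply, Module.Basis.repr_self, Finsupp.single_apply]
  have : (⟨v j, hmem j⟩ : hs.extend (Set.subset_univ _)) = ⟨v i, hmem i⟩ ↔ j = i := by
    constructor
    · intro h
      exact hv.injective (by simpa [Subtype.ext_iff] using h)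
    · rintro rfl; rfl
  simp only [Subtype.ext_iff]
  by_cases h : j = i
  · subst h; simp
  · rw [if_neg h, if_neg]
    intro hh
    exact h (hv.injective hh)

lemma linearIndependent_pair_of_disjoint {P Q : Submodule k V} (hPQ : P ⊓ Q = ⊥)
    {x y : V} (hx : x ∈ P) (hy : y ∈ Q) (hx0 : x ≠ 0) (hy0 : y ≠ 0) :
    LinearIndependent k ![x, y] := by
  rw [LinearIndependent.pair_iff]
  intro s t hst
  have h1 : s • x = -(t • y) := by linear_combination (norm := module) hst
  have hmem : s • x ∈ P ⊓ Q := ⟨Submodule.smul_mem _ _ hx, by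
    rw [h1]; exact Submodule.neg_mem _ (Submodule.smul_mem _ _ hy)⟩
  rw [hPQ] at hmem
  have hs : s = 0 := by
    rcases smul_eq_zero.1 (Submodule.mem_bot k |>.1 hmem) with h | h
    · exact h
    · exact absurd h hx0
  refine ⟨hs, ?_⟩
  subst hs
  simp only [zero_smul, zero_add] at hst
  rcases smul_eq_zero.1 hst with h | h
  · exact h
  · exact absurd h hy0

lemma linearIndependent_four_of_disjoint {P Q : Submodule k V} (hPQ : P ⊓ Q = ⊥)
    {x y x' y' : V} (hx : x ∈ P) (hy : y ∈ P) (hx' : x' ∈ Q) (hy' : y' ∈ Q)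
    (h1 : LinearIndependent k ![x, y]) (h2 : LinearIndependent k ![x', y']) :
    LinearIndependent k ![x, y, x', y'] := by
  rw [Fintype.linearIndependent_iff]
  intro g hg
  have hsum : g 0 • x + g 1 • y + (g 2 • x' + g 3 • y') = 0 := by
    rw [← hg]
    simp [Fin.sum_univ_four]
    abel
  have hmem : g 0 • x + g 1 • y ∈ P ⊓ Q := by
    constructor
    · exact add_mem (Submodule.smul_mem _ _ hx) (Submodule.smul_mem _ _ hy)
    · have : g 0 • x + g 1 • y = -(g 2 • x' + g 3 • y') := by
        linear_combination (norm := module) hsum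
      rw [this]
      exact Submodule.neg_mem _ (add_mem (Submodule.smul_mem _ _ hx') (Submodule.smul_mem _ _ hy'))
  rw [hPQ, Submodule.mem_bot] at hmem
  have h34 : g 2 • x' + g 3 • y' = 0 := by
    rw [hmem, zero_add] at hsum; exact hsum
  have e1 := (LinearIndependent.pair_iff.1 h1) (g 0) (g 1) hmem
  have e2 := (LinearIndependent.pair_iff.1 h2) (g 2) (g 3) h34
  intro i
  fin_cases i
  · exact e1.1
  · exact e1.2
  · exact e2.1
  · exact e2.2

lemma linearIndependent_single {x : V} (hx : x ≠ 0) : LinearIndependent k ![x] := by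
  apply linearIndependent_unique_iff.2
  simpa using hx

end Aux1

section Aux1b
variable {k V : Type*} [Field k] [AddCommGroup V] [Module k V]

lemma linearIndependent_triple_of_disjoint {P Q : Submodule k V} (hPQ : P ⊓ Q = ⊥)
    {x y w : V} (hx : x ∈ P) (hy : y ∈ P) (hw : w ∈ Q)
    (h1 : LinearIndependent k ![x, y]) (hw0 : w ≠ 0) :
    LinearIndependent k ![x, y, w] := by
  rw [Fintype.linearIndependent_iff]
  intro g hg
  have hsum : g 0 • x + g 1 • y + g 2 • w = 0 := by
    rw [← hg]
    simp [Fin.sum_univ_three]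
  have hmem : g 0 • x + g 1 • y ∈ P ⊓ Q := by
    constructor
    · exact add_mem (Submodule.smul_mem _ _ hx) (Submodule.smul_mem _ _ hy)
    · have : g 0 • x + g 1 • y = -(g 2 • w) := by
        linear_combination (norm := module) hsum
      rw [this]
      exact Submodule.neg_mem _ (Submodule.smul_mem _ _ hw)
  rw [hPQ, Submodule.mem_bot] at hmem
  have h3 : g 2 • w = 0 := by
    rw [hmem, zero_add] at hsum; exact hsum
  have e1 := (LinearIndependent.pair_iff.1 h1) (g 0) (g 1) hmem
  have e2 : g 2 = 0 := by
    rcases smul_eq_zero.1 h3 with h | h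
    · exact h
    · exact absurd h hw0
  intro i
  fin_cases i
  · exact e1.1
  · exact e1.2
  · exact e2

end Aux1b
section Aux2
variable {k G V : Type*} [Field k] [Group G] [AddCommGroup V] [Module k V]
variable (σ : Representation k G V)

/-- Sup of a list of submodules. -/
def listSup (l : List (Submodule k V)) : Submodule k V := l.foldr (· ⊔ ·) ⊥

lemma le_listSup_of_mem {l : List (Submodule k V)} {P : Submodule k V} (h : P ∈ l) :
    P ≤ listSup l := by
  induction l with
  | nil => simp at h
  | cons Q l ih =>
    rcases List.mem_cons.1 h with rfl | h
    · exact le_sup_left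
    · exact le_trans (ih h) le_sup_right

lemma listSup_le {l : List (Submodule k V)} {K : Submodule k V} (h : ∀ P ∈ l, P ≤ K) :
    listSup l ≤ K := by
  induction l with
  | nil => simp [listSup]
  | cons Q l ih =>
    exact sup_le (h Q (List.mem_cons_self)) (ih fun P hP => h P (List.mem_cons_of_mem _ hP))

variable {σ}

/-- Extraction of an independent spanning subfamily with projections, from a list of
irreducible invariant subspaces. -/
lemma exists_decomposition [FiniteDimensional k V] (l : List (Submodule k V))
    (hl : ∀ P ∈ l, IsSubrep σ P ∧ SubIrred σ P) :
    ∃ (n : ℕ) (X : Fin n → Submodule k V) (π : Fin n → (V →ₗ[k] V)),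
      (∀ a, X a ∈ l) ∧
      (∀ v ∈ listSup l, ∑ a, π a v = v) ∧
      (∀ a v, π a v ∈ X a) ∧
      (∀ a b, a ≠ b → ∀ x ∈ X b, π a x = 0) ∧
      (∀ a, ∀ x ∈ X a, π a x = x) ∧
      (⨆ a, X a) = listSup l := by
  classical
  induction l with
  | nil =>
    refine ⟨0, Fin.elim0, Fin.elim0, fun a => a.elim0, ?_, fun a => a.elim0,
      fun a => a.elim0, fun a => a.elim0, by simp [listSup]⟩
    intro v hv
    simp only [listSup, List.foldr_nil, Submodule.mem_bot] at hv
    simp [hv]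
  | cons Z l ih =>
    obtain ⟨n, X, π, hmem, hsum, hin, hkill, hid, hsupX⟩ :=
      ih (fun P hP => hl P (List.mem_cons_of_mem _ hP))
    have hZ := hl Z (List.mem_cons_self)
    set S := listSup l with hS
    have hlS : listSup (Z :: l) = Z ⊔ S := rfl
    by_cases hZS : Z ≤ S
    · refine ⟨n, X, π, fun a => List.mem_cons_of_mem _ (hmem a), ?_, hin, hkill, hid, ?_⟩
      · intro v hv
        exact hsum v (by rwa [hlS, sup_eq_right.2 hZS] at hv)
      · rw [hsupX, hlS, sup_eq_right.2 hZS]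
    · -- Z ⊓ S = ⊥
      have hSsub : IsSubrep σ S := by
        rw [← hsupX]
        exact isSubrep_iSup σ X (fun a => (hl _ (List.mem_cons_of_mem _ (hmem a))).1)
      have hZS0 : S ⊓ Z = ⊥ := by
        rcases hZ.2.2 (S ⊓ Z) inf_le_right (isSubrep_inf σ hSsub hZ.1) with h | h
        · exact h
        · exact absurd (h ▸ (inf_le_left : S ⊓ Z ≤ S)) hZS
      obtain ⟨R, hR⟩ := Submodule.exists_isCompl (S ⊔ Z)
      have hcompl : IsCompl Z (S ⊔ R) := by
        constructor
        · rw [disjoint_iff]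
          ext v
          simp only [Submodule.mem_inf, Submodule.mem_bot]
          constructor
          · rintro ⟨hvZ, hvSR⟩
            rcases Submodule.mem_sup.1 hvSR with ⟨s, hs, r, hr, rfl⟩
            have hrm : r ∈ (S ⊔ Z) ⊓ R := by
              refine ⟨?_, hr⟩
              have : r = (s + r) - s := by abel
              rw [this]
              exact Submodule.sub_mem _ (Submodule.mem_sup_right hvZ) (Submodule.mem_sup_left hs)
            rw [disjoint_iff.1 hR.disjoint] at hrm
            have hr0 : r = 0 := hrm
            have : s + r ∈ S ⊓ Z := ⟨by simpa [hr0] using hs, hvZ⟩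
            rw [hZS0] at this
            exact this
          · rintro rfl
            exact ⟨Submodule.zero_mem _, Submodule.zero_mem _⟩
        · rw [codisjoint_iff]
          have hR2 : (S ⊔ Z) ⊔ R = ⊤ := codisjoint_iff.1 hR.codisjoint
          rw [eq_top_iff, ← hR2]
          refine sup_le (sup_le ?_ ?_) ?_ <;> intro v hv
          · exact Submodule.mem_sup_right (Submodule.mem_sup_left hv)
          · exact Submodule.mem_sup_left hv
          · exact Submodule.mem_sup_right (Submodule.mem_sup_right hv)
      set q : V →ₗ[k] V := Z.subtype.comp (Z.projectionOnto (S ⊔ R) hcompl) with hq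
      have hqZ : ∀ z ∈ Z, q z = z := fun z hz => by
        simp only [hq, LinearMap.comp_apply]
        rw [show z = ((⟨z, hz⟩ : Z) : V) from rfl, Submodule.projectionOnto_apply_left]
        rfl
      have hqS : ∀ s ∈ S, q s = 0 := fun s hs => by
        simp only [hq, LinearMap.comp_apply]
        rw [show s = ((⟨s, Submodule.mem_sup_left hs⟩ : (S ⊔ R : Submodule k V)) : V) from rfl,
          Submodule.projectionOnto_apply_right]
        simp
      have hqv : ∀ v, q v ∈ Z := fun v => (Z.projectionOnto (S ⊔ R) hcompl v).2
      refine ⟨n + 1, Fin.snoc X Z, Fin.snoc (fun a => (π a).comp (LinearMap.id - q)) q,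
        ?_, ?_, ?_, ?_, ?_, ?_⟩
      · intro a
        cases a using Fin.lastCases with
        | last => simp only [Fin.snoc_last]; exact List.mem_cons_self
        | cast a' => simp only [Fin.snoc_castSucc]; exact List.mem_cons_of_mem _ (hmem a')
      · intro v hv
        rw [hlS] at hv
        rcases Submodule.mem_sup.1 hv with ⟨z, hz, s, hs, rfl⟩
        rw [Fin.sum_univ_castSucc]
        simp only [Fin.snoc_castSucc, Fin.snoc_last, LinearMap.comp_apply, LinearMap.sub_apply,
          LinearMap.id_apply]
        have hqzs : q (z + s) = z := by rw [map_add, hqZ z hz, hqS s hs, add_zero]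
        rw [hqzs]
        have : ∀ a : Fin n, π a (z + s - z) = π a s := fun a => by
          congr 1; abel
        simp only [this]
        rw [hsum s hs]
        abel
      · intro a v
        cases a using Fin.lastCases with
        | last => simp only [Fin.snoc_last]; exact hqv v
        | cast a' => simp only [Fin.snoc_castSucc]; exact hin a' _
      · intro a b hab x hx
        cases a using Fin.lastCases with
        | last =>
          simp only [Fin.snoc_last]
          cases b using Fin.lastCases with
          | last => exact absurd rfl hab
          | cast b' =>
            simp only [Fin.snoc_castSucc] at hx
            exact hqS x (hsupX ▸ Submodule.mem_iSup_of_mem b' hx)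
        | cast a' =>
          simp only [Fin.snoc_castSucc, LinearMap.comp_apply, LinearMap.sub_apply,
            LinearMap.id_apply]
          cases b using Fin.lastCases with
          | last =>
            simp only [Fin.snoc_last] at hx
            rw [hqZ x hx]
            simp
          | cast b' =>
            simp only [Fin.snoc_castSucc] at hx
            have hxS : x ∈ S := hsupX ▸ Submodule.mem_iSup_of_mem b' hx
            rw [hqS x hxS, sub_zero]
            exact hkill a' b' (fun h => hab (by rw [h])) x hx
      · intro a x hx
        cases a using Fin.lastCases with
        | last =>
          simp only [Fin.snoc_last] at hx ⊢
          exact hqZ x hx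
        | cast a' =>
          simp only [Fin.snoc_castSucc] at hx ⊢
          have hxS : x ∈ S := hsupX ▸ Submodule.mem_iSup_of_mem a' hx
          simp only [LinearMap.comp_apply, LinearMap.sub_apply, LinearMap.id_apply]
          rw [hqS x hxS, sub_zero]
          exact hid a' x hx
      · rw [hlS]
        refine le_antisymm (iSup_le fun a => ?_) (sup_le ?_ ?_)
        · cases a using Fin.lastCases with
          | last => simp only [Fin.snoc_last]; exact le_sup_left
          | cast a' =>
            simp only [Fin.snoc_castSucc]
            exact le_trans (le_trans (le_iSup X a') hsupX.le) le_sup_right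
        · have := le_iSup (Fin.snoc X Z : Fin (n+1) → Submodule k V) (Fin.last n)
          simpa only [Fin.snoc_last] using this
        · rw [← hsupX]
          refine iSup_le fun a => ?_
          have := le_iSup (Fin.snoc X Z : Fin (n+1) → Submodule k V) a.castSucc
          simpa only [Fin.snoc_castSucc] using this

/-- Equivariance of the projections onto the pieces of a decomposition. -/
lemma proj_equivariant {n : ℕ} {X : Fin n → Submodule k V} {π : Fin n → (V →ₗ[k] V)}
    {N : Submodule k V}
    (hXsub : ∀ a, IsSubrep σ (X a))
    (hNsub : IsSubrep σ N)
    (hsum : ∀ v ∈ N, ∑ a, π a v = v)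
    (hin : ∀ a v, π a v ∈ X a)
    (hkill : ∀ a b, a ≠ b → ∀ x ∈ X b, π a x = 0)
    (hid : ∀ a, ∀ x ∈ X a, π a x = x) :
    ∀ (b : Fin n) (h : G), ∀ v ∈ N, π b (σ h v) = σ h (π b v) := by
  classical
  intro b h v hv
  conv_lhs => rw [← hsum v hv]
  rw [map_sum, map_sum]
  rw [Finset.sum_eq_single b]
  · exact hid b _ (by
      have := hin b v
      exact hXsub b h _ this)
  · intro a _ hab
    exact hkill b a (Ne.symm hab) _ (hXsub a h _ (hin a v))
  · intro hb
    simp at hb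

/-- An irreducible invariant subspace contained in a (finite) sum of irreducible invariant
subspaces is isomorphic to one of them. -/
lemma exists_repIso_of_le_listSup [FiniteDimensional k V]
    {Y : Submodule k V} (hYs : IsSubrep σ Y) (hYirr : SubIrred σ Y)
    (l : List (Submodule k V)) (hl : ∀ P ∈ l, IsSubrep σ P ∧ SubIrred σ P)
    (hle : Y ≤ listSup l) :
    ∃ P ∈ l, ∃ hPs : IsSubrep σ P, RepIso (subRep σ Y hYs) (subRep σ P hPs) := by
  obtain ⟨n, X, π, hmem, hsum, hin, hkill, hid, hsupX⟩ := exists_decomposition l hl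
  have hNsub : IsSubrep σ (listSup l) := by
    rw [← hsupX]
    exact isSubrep_iSup σ X (fun a => (hl _ (hmem a)).1)
  have hequiv := proj_equivariant (σ := σ) (fun a => (hl _ (hmem a)).1) hNsub hsum hin hkill hid
  obtain ⟨y, hy, hy0⟩ := Submodule.exists_mem_ne_zero_of_ne_bot hYirr.1
  have hyN : y ∈ listSup l := hle hy
  have : ∃ a, π a y ≠ 0 := by
    by_contra hc
    push_neg at hc
    apply hy0
    rw [← hsum y hyN]
    simp [hc]
  obtain ⟨a, ha⟩ := this
  refine ⟨X a, hmem a, (hl _ (hmem a)).1, ?_⟩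
  exact repIso_of_hom hYs hYirr (hl _ (hmem a)).1 (hl _ (hmem a)).2 (π a)
    (fun v _ => hin a v) (fun h v hv => hequiv a h v (hle hv)) ⟨y, hy, ha⟩

end Aux2
section Aux3
variable {k G V : Type*} [Field k] [Group G] [AddCommGroup V] [Module k V]

/-- The product of two submodules inside the tensor square. -/
def tmulSub (P Q : Submodule k V) : Submodule k (V ⊗[k] V) :=
  Submodule.span k {z | ∃ p ∈ P, ∃ q ∈ Q, z = p ⊗ₜ[k] q}

lemma tmul_mem_tmulSub {P Q : Submodule k V} {p q : V} (hp : p ∈ P) (hq : q ∈ Q) :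
    p ⊗ₜ[k] q ∈ tmulSub P Q :=
  Submodule.subset_span ⟨p, hp, q, hq, rfl⟩

lemma tmulSub_le {P Q : Submodule k V} {K : Submodule k (V ⊗[k] V)}
    (h : ∀ p ∈ P, ∀ q ∈ Q, p ⊗ₜ[k] q ∈ K) : tmulSub P Q ≤ K := by
  rw [tmulSub, Submodule.span_le]
  rintro _ ⟨p, hp, q, hq, rfl⟩
  exact h p hp q hq

lemma tmulSub_mono {P P' Q Q' : Submodule k V} (hP : P ≤ P') (hQ : Q ≤ Q') :
    tmulSub P Q ≤ tmulSub P' Q' :=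
  tmulSub_le fun p hp q hq => tmul_mem_tmulSub (hP hp) (hQ hq)

/-- If `P`, `Q` lie in sups of families, the tensor product submodule lies in the sup of the
pairwise products. -/
lemma tmulSub_le_of_le_iSup {ι κ : Sort*} {P Q : Submodule k V}
    {Pi : ι → Submodule k V} {Qj : κ → Submodule k V}
    (hP : P ≤ ⨆ i, Pi i) (hQ : Q ≤ ⨆ j, Qj j)
    {K : Submodule k (V ⊗[k] V)} (h : ∀ i j, tmulSub (Pi i) (Qj j) ≤ K) :
    tmulSub P Q ≤ K := by
  refine tmulSub_le fun p hp q hq => ?_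
  have hp' : p ∈ ⨆ i, Pi i := hP hp
  have hq' : q ∈ ⨆ j, Qj j := hQ hq
  clear hp hq
  refine Submodule.iSup_induction Pi (motive := fun p => p ⊗ₜ[k] q ∈ K) hp'
    (fun i x hx => ?_) (by simp [TensorProduct.zero_tmul]) (fun x y hx hy => by
      show (x + y) ⊗ₜ[k] q ∈ K
      rw [TensorProduct.add_tmul]; exact add_mem hx hy)
  refine Submodule.iSup_induction Qj (motive := fun q => x ⊗ₜ[k] q ∈ K) hq'
    (fun j y hy => h i j (tmul_mem_tmulSub hx hy)) (by simp [TensorProduct.tmul_zero])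
    (fun y z hy hz => by
      show x ⊗ₜ[k] (y + z) ∈ K
      rw [TensorProduct.tmul_add]; exact add_mem hy hz)

variable (σ : Representation k G V)

lemma tprod_apply_tmul (g : G) (x y : V) :
    (σ.tprod σ) g (x ⊗ₜ[k] y) = σ g x ⊗ₜ[k] σ g y := by
  rw [Representation.tprod_apply, TensorProduct.map_tmul]

lemma tau_comm_tprod (g : G) (v : V ⊗[k] V) :
    tau k V ((σ.tprod σ) g v) = (σ.tprod σ) g (tau k V v) := by
  induction v with
  | zero => simp
  | tmul x y => simp [tprod_apply_tmul, tau]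
  | add x y hx hy => simp only [map_add, hx, hy]

lemma isSubrep_Tsq (ε : ℤ) : IsSubrep (σ.tprod σ) (Tsq k V ε) := by
  intro g v hv
  rw [Tsq, Module.End.mem_eigenspace_iff] at hv ⊢
  rw [tau_comm_tprod, hv, map_smul]

lemma mem_Tsq_iff (ε : ℤ) (v : V ⊗[k] V) : v ∈ Tsq k V ε ↔ tau k V v = (ε : k) • v :=
  Module.End.mem_eigenspace_iff

@[simp] lemma tau_tmul (x y : V) : tau k V (x ⊗ₜ[k] y) = y ⊗ₜ[k] x := rfl

/-- The functional on the tensor square induced by two functionals. -/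
noncomputable def phi (f g : V →ₗ[k] k) : V ⊗[k] V →ₗ[k] k :=
  (TensorProduct.lid k k).toLinearMap.comp (TensorProduct.map f g)

@[simp] lemma phi_tmul (f g : V →ₗ[k] k) (x y : V) :
    phi f g (x ⊗ₜ[k] y) = f x * g y := by
  simp [phi, smul_eq_mul]

end Aux3
section Aux4
variable {k G V : Type*} [Field k] [Group G] [AddCommGroup V] [Module k V]
variable (ρ : Representation k G V) {H : Subgroup G}

lemma rho_injective (g : G) : Function.Injective (ρ g) := by
  intro x y hxy
  have : ρ g⁻¹ (ρ g x) = ρ g⁻¹ (ρ g y) := by rw [hxy]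
  simpa [← Module.End.mul_apply, ← map_mul] using this

lemma rho_mul_apply (g g' : G) (v : V) : ρ g (ρ g' v) = ρ (g * g') v := by
  rw [← Module.End.mul_apply, ← map_mul]

lemma map_rho_isSubrep (hH : H.Normal) {P : Submodule k V}
    (hP : IsSubrep (ρ.comp H.subtype) P) (g : G) :
    IsSubrep (ρ.comp H.subtype) (Submodule.map (ρ g) P) := by
  rintro h _ ⟨p, hp, rfl⟩
  have hmem : g⁻¹ * ↑h * g ∈ H := by simpa using hH.conj_mem _ h.2 g⁻¹
  refine ⟨(ρ.comp H.subtype) (⟨g⁻¹ * ↑h * g, hmem⟩ : H) p, hP _ p hp, ?_⟩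
  show ρ g (ρ (g⁻¹ * ↑h * g) p) = ρ (↑h) (ρ g p)
  rw [rho_mul_apply, rho_mul_apply]
  congr 1
  group

lemma map_rho_map_rho_inv (g : G) (P : Submodule k V) :
    Submodule.map (ρ g⁻¹) (Submodule.map (ρ g) P) = P := by
  rw [← Submodule.map_comp]
  have : (ρ g⁻¹).comp (ρ g) = LinearMap.id := by
    rw [← Module.End.mul_eq_comp, ← map_mul, inv_mul_cancel, map_one, Module.End.one_eq_id]
  rw [this, Submodule.map_id]

lemma map_rho_inv_map_rho (g : G) (P : Submodule k V) :
    Submodule.map (ρ g) (Submodule.map (ρ g⁻¹) P) = P := by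
  have := map_rho_map_rho_inv ρ g⁻¹ P
  rwa [inv_inv] at this

lemma map_rho_subIrred (hH : H.Normal) {P : Submodule k V}
    (hP : SubIrred (ρ.comp H.subtype) P) (g : G) :
    SubIrred (ρ.comp H.subtype) (Submodule.map (ρ g) P) := by
  constructor
  · intro hbot
    apply hP.1
    have := congrArg (Submodule.map (ρ g⁻¹)) hbot
    rwa [map_rho_map_rho_inv, Submodule.map_bot] at this
  · intro U hU hUs
    have hU' : Submodule.map (ρ g⁻¹) U ≤ P := by
      have := Submodule.map_mono (f := ρ g⁻¹) hU
      rwa [map_rho_map_rho_inv] at this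
    rcases hP.2 _ hU' (map_rho_isSubrep ρ hH hUs g⁻¹) with h | h
    · left
      have := congrArg (Submodule.map (ρ g)) h
      rwa [map_rho_inv_map_rho, Submodule.map_bot] at this
    · right
      have := congrArg (Submodule.map (ρ g)) h
      rwa [map_rho_inv_map_rho] at this

/-- Conjugation preserves isomorphism of subrepresentations of a normal subgroup. -/
lemma repIso_map_rho (hH : H.Normal) {P Q : Submodule k V}
    (hPs : IsSubrep (ρ.comp H.subtype) P) (hQs : IsSubrep (ρ.comp H.subtype) Q)
    (hiso : RepIso (subRep (ρ.comp H.subtype) P hPs) (subRep (ρ.comp H.subtype) Q hQs)) (g : G) :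
    RepIso (subRep (ρ.comp H.subtype) _ (map_rho_isSubrep ρ hH hPs g))
      (subRep (ρ.comp H.subtype) _ (map_rho_isSubrep ρ hH hQs g)) := by
  obtain ⟨e, he⟩ := hiso
  let eP := Submodule.equivMapOfInjective (ρ g) (rho_injective ρ g) P
  let eQ := Submodule.equivMapOfInjective (ρ g) (rho_injective ρ g) Q
  have heP : ∀ x : P, ((eP x : Submodule.map (ρ g) P) : V) = ρ g x := fun x => rfl
  have heQ : ∀ x : Q, ((eQ x : Submodule.map (ρ g) Q) : V) = ρ g x := fun x => rfl
  refine ⟨(eP.symm.trans e).trans eQ, fun h w => ?_⟩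
  set x : P := eP.symm w with hx
  have hw : (w : V) = ρ g (x : V) := by rw [hx, ← heP (eP.symm w), eP.apply_symm_apply]
  have hmem : g⁻¹ * ↑h * g ∈ H := by simpa using hH.conj_mem _ h.2 g⁻¹
  set h' : H := ⟨g⁻¹ * ↑h * g, hmem⟩ with hh'
  have hcomm : ∀ v : V, ρ (↑h) (ρ g v) = ρ g (ρ (↑h') v) := by
    intro v
    rw [rho_mul_apply, rho_mul_apply]
    congr 1
    simp only [hh']
    group
  have key : subRep (ρ.comp H.subtype) _ (map_rho_isSubrep ρ hH hPs g) h w =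
      eP (subRep (ρ.comp H.subtype) P hPs h' x) := by
    ext
    rw [heP]
    show ρ (↑h) (w : V) = ρ g (ρ (↑h') (x : V))
    rw [hw, hcomm]
  rw [key]
  simp only [LinearEquiv.trans_apply, LinearEquiv.symm_apply_apply]
  ext
  rw [heQ]
  rw [he h' x]
  show ρ g (ρ (↑h') ((e x : Q) : V)) = ρ (↑h) ((eQ (e x) : V))
  rw [heQ, hcomm]

end Aux4
section Aux5
variable {k G V : Type*} [Field k] [Group G] [AddCommGroup V] [Module k V]

lemma repIso_of_eq {σ : Representation k G V} {P Q : Submodule k V} (h : P = Q)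
    (hP : IsSubrep σ P) (hQ : IsSubrep σ Q) :
    RepIso (subRep σ P hP) (subRep σ Q hQ) := by
  subst h; exact RepIso.refl _

lemma repIso_congr_left {σ : Representation k G V} {W' : Type*} [AddCommGroup W'] [Module k W']
    {τ : Representation k G W'} {P P' : Submodule k V} (h : P = P')
    (hPs : IsSubrep σ P) (hP's : IsSubrep σ P')
    (hiso : RepIso (subRep σ P hPs) τ) : RepIso (subRep σ P' hP's) τ := by
  subst h; exact hiso

/-- In `I ⊕ L` with `I` irreducible and `L` a trivial line, an invariant subspace meeting `I`
trivially is a trivial line. -/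
lemma triv_line_complement {U : Type*} [AddCommGroup U] [Module k U] [FiniteDimensional k U]
    (τ : Representation k G U) {I L C : Submodule k U}
    (hIs : IsSubrep τ I) (hIirr : SubIrred τ I)
    (hL1 : Module.finrank k L = 1) (hLtriv : TrivOn τ L) (hIL : Disjoint I L)
    (hCle : C ≤ I ⊔ L) (hCs : IsSubrep τ C) (hCI : C ⊓ I = ⊥) (hCne : C ≠ ⊥) :
    Module.finrank k C = 1 ∧ TrivOn τ C := by
  have hILbot : I ⊓ L = ⊥ := disjoint_iff.1 hIL
  have hrank : Module.finrank k C = 1 := by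
    have h1 : Module.finrank k ↥(C ⊔ I) + Module.finrank k ↥(C ⊓ I) =
        Module.finrank k C + Module.finrank k I := Submodule.finrank_sup_add_finrank_inf_eq C I
    have h2 : Module.finrank k ↥(I ⊔ L) + Module.finrank k ↥(I ⊓ L) =
        Module.finrank k I + Module.finrank k L := Submodule.finrank_sup_add_finrank_inf_eq I L
    rw [hCI] at h1
    rw [hILbot] at h2
    simp only [finrank_bot, add_zero] at h1 h2
    have hle : Module.finrank k ↥(C ⊔ I) ≤ Module.finrank k ↥(I ⊔ L) := by
      apply Submodule.finrank_mono
      exact sup_le hCle le_sup_left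
    have hCpos : 0 < Module.finrank k C := by
      rcases Nat.eq_zero_or_pos (Module.finrank k C) with h | h
      · exact absurd (Submodule.finrank_eq_zero.1 h) hCne
      · exact h
    omega
  refine ⟨hrank, ?_⟩
  obtain ⟨b, hb, hb0⟩ := Submodule.exists_mem_ne_zero_of_ne_bot hCne
  have hCspan : Submodule.span k {b} = C := by
    refine Submodule.eq_of_le_of_finrank_le ((Submodule.span_singleton_le_iff_mem b C).2 hb) ?_
    rw [hrank, finrank_span_singleton hb0]
  obtain ⟨w, hw, l, hl, hbwl⟩ := Submodule.mem_sup.1 (hCle hb)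
  have hl0 : l ≠ 0 := by
    rintro rfl
    rw [add_zero] at hbwl
    have : b ∈ C ⊓ I := ⟨hb, hbwl ▸ hw⟩
    rw [hCI] at this
    exact hb0 this
  have hfix : ∀ g : G, τ g b = b := by
    intro g
    have hgb : τ g b ∈ C := hCs g b hb
    rw [← hCspan] at hgb
    obtain ⟨c, hc⟩ := Submodule.mem_span_singleton.1 hgb
    -- τ g b = τ g w + l
    have hgb2 : τ g b = τ g w + l := by
      rw [← hbwl, map_add, hLtriv g l hl]
      
    have hkey : (c • w - τ g w) = (1 - c) • l := by
      have h1 : c • b = τ g b := hc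
      rw [hgb2, ← hbwl, smul_add] at h1
      have : c • w - τ g w = l - c • l := by linear_combination (norm := module) h1
      rw [this, sub_smul, one_smul]
    have hmem : (1 - c) • l ∈ I ⊓ L := by
      constructor
      · rw [← hkey]
        exact Submodule.sub_mem _ (Submodule.smul_mem _ _ hw) (hIs g w hw)
      · exact Submodule.smul_mem _ _ hl
    rw [hILbot] at hmem
    have hc1 : c = 1 := by
      rcases smul_eq_zero.1 hmem with h | h
      · exact (sub_eq_zero.1 h).symm
      · exact absurd h hl0
    rw [← hc, hc1, one_smul]
  intro g v hv
  rw [← hCspan] at hv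
  obtain ⟨c, hc⟩ := Submodule.mem_span_singleton.1 hv
  rw [← hc, map_smul, hfix g]

lemma small_dichotomy [FiniteDimensional k V] (ρ : Representation k G V) (ε : ℤ)
    (hsmall : IsSmall ρ ε) {A B : Submodule k (V ⊗[k] V)}
    (hAs : IsSubrep (ρ.tprod ρ) A) (hBs : IsSubrep (ρ.tprod ρ) B)
    (hAT : A ≤ Tsq k V ε) (hBT : B ≤ Tsq k V ε)
    (hdisj : A ⊓ B = ⊥) (hBne : B ≠ ⊥) :
    A = ⊥ ∨ (Module.finrank k A = 1 ∧ TrivOn (ρ.tprod ρ) A) ∨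
      (Module.finrank k B = 1 ∧ TrivOn (ρ.tprod ρ) B) := by
  have : Module.Finite k (V ⊗[k] V) := Module.Finite.tensorProduct k V V
  rcases hsmall with ⟨hTs, hTirr⟩ | ⟨I, L, hIs, hLs, hdisjIL, hsupIL, hIirr, hL1, hLtriv⟩
  · rcases hTirr.2 A hAT hAs with h | h
    · exact Or.inl h
    · exfalso
      have hb2 : B ≤ A ⊓ B := le_inf (h ▸ hBT) le_rfl
      rw [hdisj] at hb2
      exact hBne (le_bot_iff.1 hb2)
  · have hIL : Disjoint I L := hdisjIL
    rcases hIirr.2 (A ⊓ I) inf_le_right (isSubrep_inf _ hAs hIs) with h | h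
    · by_cases hA : A = ⊥
      · exact Or.inl hA
      · refine Or.inr (Or.inl (triv_line_complement (ρ.tprod ρ) hIs hIirr hL1 hLtriv hIL
          ?_ hAs h hA))
        rw [hsupIL]
        exact hAT
    · have hIA : I ≤ A := h ▸ inf_le_left
      have hBI : B ⊓ I = ⊥ := by
        rw [← le_bot_iff, ← hdisj]
        intro v hv
        exact ⟨hIA hv.2, hv.1⟩
      refine Or.inr (Or.inr (triv_line_complement (ρ.tprod ρ) hIs hIirr hL1 hLtriv hIL
        ?_ hBs hBI hBne))
      rw [hsupIL]
      exact hBT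

end Aux5

section Aux6
variable {k G V : Type*} [Field k] [Group G] [AddCommGroup V] [Module k V]

lemma repIso_congr₂ {σ : Representation k G V} {P P' Q Q' : Submodule k V}
    (h : P = P') (h' : Q = Q') (hPs : IsSubrep σ P) (hP's : IsSubrep σ P')
    (hQs : IsSubrep σ Q) (hQ's : IsSubrep σ Q')
    (hiso : RepIso (subRep σ P hPs) (subRep σ Q hQs)) :
    RepIso (subRep σ P' hP's) (subRep σ Q' hQ's) := by
  subst h; subst h'; exact hiso

lemma repIso_of_map_rho (ρ : Representation k G V) {H : Subgroup G} (hH : H.Normal)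
    {P Q : Submodule k V}
    (hPs : IsSubrep (ρ.comp H.subtype) P) (hQs : IsSubrep (ρ.comp H.subtype) Q) (g : G)
    (hPs' : IsSubrep (ρ.comp H.subtype) (Submodule.map (ρ g) P))
    (hQs' : IsSubrep (ρ.comp H.subtype) (Submodule.map (ρ g) Q))
    (hiso : RepIso (subRep (ρ.comp H.subtype) _ hPs') (subRep (ρ.comp H.subtype) _ hQs')) :
    RepIso (subRep (ρ.comp H.subtype) P hPs) (subRep (ρ.comp H.subtype) Q hQs) := by
  have h2 := repIso_map_rho ρ hH hPs' hQs' hiso g⁻¹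
  exact repIso_congr₂ (map_rho_map_rho_inv ρ g P) (map_rho_map_rho_inv ρ g Q) _ _ _ _ h2

end Aux6
set_option maxHeartbeats 2000000 in
/-- If a faithful irreducible `ε`-small representation `V` of a finite group contains two
non-isomorphic irreducible `H`-submodules for a normal subgroup `H`, then all irreducible
`H`-submodules of `V` are one-dimensional, each character of `H` occurs with multiplicity
at most one, and `ε = -1` or `dim V = 2`. -/
theorem small_rep_non_isotypic
    (k G V : Type*) [Field k] [IsAlgClosed k] [CharZero k] [Group G] [Finite G]
    [AddCommGroup V] [Module k V] [FiniteDimensional k V]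
    (ρ : Representation k G V) (ε : ℤ) (hε : ε = 1 ∨ ε = -1)
    (hirr : IsIrred ρ) (hsmall : IsSmall ρ ε)
    (H : Subgroup G) (hH : H.Normal)
    (W₁ W₂ : Submodule k V)
    (hW₁ : IsSubrep (ρ.comp H.subtype) W₁) (hW₂ : IsSubrep (ρ.comp H.subtype) W₂)
    (hW₁irr : SubIrred (ρ.comp H.subtype) W₁) (hW₂irr : SubIrred (ρ.comp H.subtype) W₂)
    (hnoniso : ¬ RepIso (subRep (ρ.comp H.subtype) W₁ hW₁) (subRep (ρ.comp H.subtype) W₂ hW₂)) :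
    (∀ W : Submodule k V, IsSubrep (ρ.comp H.subtype) W → SubIrred (ρ.comp H.subtype) W →
      Module.finrank k W = 1) ∧
    (∀ χ : H →* kˣ, Module.finrank k (weightSpace ρ H χ) ≤ 1) ∧
    (ε = -1 ∨ Module.finrank k V = 2) := by
  classical
  have hfinG : Fintype G := Fintype.ofFinite G
  have hFT : Module.Finite k (V ⊗[k] V) := Module.Finite.tensorProduct k V V
  have hee : (ε : k) * (ε : k) = 1 := by rcases hε with rfl | rfl <;> norm_num
  set σ : Representation k (↥H) V := ρ.comp H.subtype with hσdef
  -- the two modules are disjoint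
  have hW12 : W₁ ⊓ W₂ = ⊥ := by
    rcases hW₂irr.2 (W₁ ⊓ W₂) inf_le_right (isSubrep_inf σ hW₁ hW₂) with h | h
    · exact h
    · exfalso
      have hle : W₂ ≤ W₁ := h ▸ inf_le_left
      rcases hW₁irr.2 W₂ hle hW₂ with h2 | h2
      · exact hW₂irr.1 h2
      · exact hnoniso (repIso_of_eq h2.symm hW₁ hW₂)
  -- the translates of W₁ span V
  set l : List (Submodule k V) :=
    (Finset.univ : Finset G).toList.map (fun g => Submodule.map (ρ g) W₁) with hldef
  have hlprop : ∀ P ∈ l, IsSubrep σ P ∧ SubIrred σ P := by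
    intro P hP
    rw [hldef, List.mem_map] at hP
    obtain ⟨g, -, rfl⟩ := hP
    exact ⟨map_rho_isSubrep ρ hH hW₁ g, map_rho_subIrred ρ hH hW₁irr g⟩
  have hlsup : listSup l = ⨆ g : G, Submodule.map (ρ g) W₁ := by
    refine le_antisymm (listSup_le fun P hP => ?_) (iSup_le fun g => le_listSup_of_mem ?_)
    · rw [hldef, List.mem_map] at hP
      obtain ⟨g, -, rfl⟩ := hP
      exact le_iSup (fun g => Submodule.map (ρ g) W₁) g
    · rw [hldef, List.mem_map]
      exact ⟨g, Finset.mem_toList.2 (Finset.mem_univ g), rfl⟩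
  have hTop : listSup l = ⊤ := by
    rw [hlsup]
    have hsub : IsSubrep ρ (⨆ g : G, Submodule.map (ρ g) W₁) := by
      intro g v hv
      refine Submodule.iSup_induction _
        (motive := fun v => ρ g v ∈ ⨆ g' : G, Submodule.map (ρ g') W₁) hv ?_ (by simp)
        (fun x y hx hy => by
          show ρ g (x + y) ∈ _
          rw [map_add]; exact add_mem hx hy)
      rintro g' _ ⟨w, hw, rfl⟩
      refine Submodule.mem_iSup_of_mem (g * g') ⟨w, hw, ?_⟩
      rw [← rho_mul_apply]
    rcases hirr.2 _ hsub with h | h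
    · exfalso
      apply hW₁irr.1
      have hW1le : W₁ ≤ ⨆ g : G, Submodule.map (ρ g) W₁ := by
        have h1 : Submodule.map (ρ (1 : G)) W₁ = W₁ := by
          rw [map_one, Module.End.one_eq_id, Submodule.map_id]
        exact le_trans (le_of_eq h1.symm) (le_iSup (fun g => Submodule.map (ρ g) W₁) (1 : G))
      rw [h] at hW1le
      exact le_bot_iff.1 hW1le
    · exact h
  -- decomposition into blocks
  obtain ⟨n, X, π, hmem, hsum0, hin, hkill, hid, hsupX⟩ := exists_decomposition l hlprop
  have hsum : ∀ v : V, ∑ a, π a v = v := fun v => hsum0 v (by rw [hTop]; trivial)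
  have hXsub : ∀ a, IsSubrep σ (X a) := fun a => (hlprop _ (hmem a)).1
  have hXirr : ∀ a, SubIrred σ (X a) := fun a => (hlprop _ (hmem a)).2
  have hequiv : ∀ (a) (h : ↥H) (v), π a (σ h v) = σ h (π a v) := by
    intro a h v
    exact proj_equivariant (N := (⊤ : Submodule k V)) hXsub (fun _ _ _ => trivial)
      (fun v _ => hsum v) hin hkill hid a h v trivial
  -- blocks are disjoint
  have hXdisj : ∀ a b, a ≠ b → X a ⊓ X b = ⊥ := by
    intro a b hab
    rw [← le_bot_iff]
    intro v hv
    have : v = π a v := (hid a v hv.1).symm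
    rw [this, hkill a b hab v hv.2]
    exact Submodule.zero_mem _
  -- class sups
  set cS : (Fin n → Prop) → Submodule k V := fun s => ⨆ i : {i // s i}, X i.1 with hcSdef
  have hclass_kill : ∀ (s : Fin n → Prop) v, v ∈ cS s → ∀ j, ¬ s j → π j v = 0 := by
    intro s v hv j hj
    refine Submodule.iSup_induction _ (motive := fun v => π j v = 0) hv ?_ (map_zero _)
      (fun x y hx hy => by
        show π j (x + y) = 0
        rw [map_add, hx, hy, add_zero])
    rintro ⟨i, hi⟩ x hx
    exact hkill j i (fun h => hj (h ▸ hi)) x hx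
  have hclass_disj : ∀ s t : Fin n → Prop, (∀ i, s i → t i → False) → cS s ⊓ cS t = ⊥ := by
    intro s t hst
    rw [← le_bot_iff]
    intro v hv
    have : v = 0 := by
      rw [← hsum v]
      refine Finset.sum_eq_zero fun a _ => ?_
      by_cases hsa : s a
      · exact hclass_kill t v hv.2 a (fun hta => hst a hsa hta)
      · exact hclass_kill s v hv.1 a hsa
    simp [this]
  -- every irreducible lies in the sup of its class
  have hpcont : ∀ (Y : Submodule k V) (hYs : IsSubrep σ Y) (hYirr : SubIrred σ Y),
      Y ≤ cS (fun i => RepIso (subRep σ Y hYs) (subRep σ (X i) (hXsub i))) := by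
    intro Y hYs hYirr y hy
    rw [← hsum y]
    refine Submodule.sum_mem _ fun a _ => ?_
    by_cases hz : ∀ y' ∈ Y, π a y' = 0
    · rw [hz y hy]; exact Submodule.zero_mem _
    · push_neg at hz
      have hiso := repIso_of_hom hYs hYirr (hXsub a) (hXirr a) (π a) (fun v _ => hin a v)
        (fun h v hv => hequiv a h v) hz
      exact Submodule.mem_iSup_of_mem ⟨a, hiso⟩ (hin a y)
  -- every irreducible is isomorphic to a block
  have hisoX : ∀ (Y : Submodule k V) (hYs : IsSubrep σ Y) (hYirr : SubIrred σ Y),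
      ∃ a, RepIso (subRep σ Y hYs) (subRep σ (X a) (hXsub a)) := by
    intro Y hYs hYirr
    obtain ⟨y, hy, hy0⟩ := Submodule.exists_mem_ne_zero_of_ne_bot hYirr.1
    have hex : ∃ a, π a y ≠ 0 := by
      by_contra hc
      push_neg at hc
      apply hy0
      rw [← hsum y]
      simp [hc]
    obtain ⟨a, ha⟩ := hex
    exact ⟨a, repIso_of_hom hYs hYirr (hXsub a) (hXirr a) (π a) (fun v _ => hin a v)
      (fun h v hv => hequiv a h v) ⟨y, hy, ha⟩⟩
  obtain ⟨a₁, hiso₁⟩ := hisoX W₁ hW₁ hW₁irr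
  obtain ⟨a₂, hiso₂⟩ := hisoX W₂ hW₂ hW₂irr
  have hR12 : ¬ RepIso (subRep σ (X a₁) (hXsub a₁)) (subRep σ (X a₂) (hXsub a₂)) :=
    fun hr => hnoniso (hiso₁.trans (hr.trans hiso₂.symm))
  have ha12 : a₁ ≠ a₂ := by
    rintro rfl
    exact hR12 (RepIso.refl _)
  -- the diagonal and mixed parts
  set D : Submodule k (V ⊗[k] V) :=
    ⨆ p : {p : Fin n × Fin n //
      RepIso (subRep σ (X p.1) (hXsub p.1)) (subRep σ (X p.2) (hXsub p.2))},
      tmulSub (X p.1.1) (X p.1.2) with hDdef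
  set M : Submodule k (V ⊗[k] V) :=
    ⨆ p : {p : Fin n × Fin n //
      ¬ RepIso (subRep σ (X p.1) (hXsub p.1)) (subRep σ (X p.2) (hXsub p.2))},
      tmulSub (X p.1.1) (X p.1.2) with hMdef
  have httm : ∀ (i j : Fin n) (v : V ⊗[k] V),
      TensorProduct.map (π i) (π j) v ∈ tmulSub (X i) (X j) := by
    intro i j v
    induction v with
    | zero => rw [map_zero]; exact Submodule.zero_mem _
    | tmul x y =>
      rw [TensorProduct.map_tmul]
      exact tmul_mem_tmulSub (hin i x) (hin j y)
    | add x y hx hy => rw [map_add]; exact add_mem hx hy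
  have hsumten : ∀ v : V ⊗[k] V,
      ∑ p : Fin n × Fin n, TensorProduct.map (π p.1) (π p.2) v = v := by
    intro v
    induction v with
    | zero => simp
    | tmul x y =>
      rw [Fintype.sum_prod_type]
      simp only [TensorProduct.map_tmul]
      rw [← hsum x, ← hsum y]
      rw [TensorProduct.sum_tmul]
      congr 1
      ext i
      rw [TensorProduct.tmul_sum]
      congr 1
      ext j
      congr 1 <;> rw [hsum]
    | add x y hx hy =>
      simp only [map_add]
      rw [Finset.sum_add_distrib, hx, hy]
  have hkillten : ∀ (a b : Fin n) (v : V ⊗[k] V), v ∈ tmulSub (X a) (X b) →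
      ∀ i j : Fin n, (i ≠ a ∨ j ≠ b) → TensorProduct.map (π i) (π j) v = 0 := by
    intro a b v hv i j hij
    induction hv using Submodule.span_induction with
    | mem z hz =>
      obtain ⟨p, hp, q, hq, rfl⟩ := hz
      rw [TensorProduct.map_tmul]
      rcases hij with h | h
      · rw [hkill i a h p hp, TensorProduct.zero_tmul]
      · rw [hkill j b h q hq, TensorProduct.tmul_zero]
    | zero => rw [map_zero]
    | add x y _ _ hx hy => rw [map_add, hx, hy, add_zero]
    | smul c x _ hx => rw [map_smul, hx, smul_zero]
  have hDkill : ∀ v ∈ D, ∀ i j : Fin n,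
      ¬ RepIso (subRep σ (X i) (hXsub i)) (subRep σ (X j) (hXsub j)) →
      TensorProduct.map (π i) (π j) v = 0 := by
    intro v hv i j hnr
    refine Submodule.iSup_induction _
      (motive := fun v => TensorProduct.map (π i) (π j) v = 0) hv ?_ (map_zero _)
      (fun x y hx hy => by
        show TensorProduct.map (π i) (π j) (x + y) = 0
        rw [map_add, hx, hy, add_zero])
    rintro ⟨⟨a, b⟩, hab⟩ x hx
    refine hkillten a b x hx i j ?_
    by_contra hc
    push_neg at hc
    obtain ⟨rfl, rfl⟩ := hc
    exact hnr hab
  have hMkill : ∀ v ∈ M, ∀ i j : Fin n,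
      RepIso (subRep σ (X i) (hXsub i)) (subRep σ (X j) (hXsub j)) →
      TensorProduct.map (π i) (π j) v = 0 := by
    intro v hv i j hr
    refine Submodule.iSup_induction _
      (motive := fun v => TensorProduct.map (π i) (π j) v = 0) hv ?_ (map_zero _)
      (fun x y hx hy => by
        show TensorProduct.map (π i) (π j) (x + y) = 0
        rw [map_add, hx, hy, add_zero])
    rintro ⟨⟨a, b⟩, hab⟩ x hx
    refine hkillten a b x hx i j ?_
    by_contra hc
    push_neg at hc
    obtain ⟨rfl, rfl⟩ := hc
    exact hab hr
  have hDMbot : D ⊓ M = ⊥ := by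
    rw [← le_bot_iff]
    intro v hv
    have : v = 0 := by
      rw [← hsumten v]
      refine Finset.sum_eq_zero fun p _ => ?_
      by_cases hr : RepIso (subRep σ (X p.1) (hXsub p.1)) (subRep σ (X p.2) (hXsub p.2))
      · exact hMkill v hv.2 p.1 p.2 hr
      · exact hDkill v hv.1 p.1 p.2 hr
    simp [this]
  have hDMtop : ∀ v : V ⊗[k] V, v ∈ D ⊔ M := by
    intro v
    rw [← hsumten v]
    refine Submodule.sum_mem _ fun p _ => ?_
    by_cases hr : RepIso (subRep σ (X p.1) (hXsub p.1)) (subRep σ (X p.2) (hXsub p.2))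
    · exact Submodule.mem_sup_left (Submodule.mem_iSup_of_mem ⟨(p.1, p.2), hr⟩ (httm p.1 p.2 v))
    · exact Submodule.mem_sup_right (Submodule.mem_iSup_of_mem ⟨(p.1, p.2), hr⟩ (httm p.1 p.2 v))
  have htauD : ∀ v ∈ D, tau k V v ∈ D := by
    intro v hv
    refine Submodule.iSup_induction _ (motive := fun v => tau k V v ∈ D) hv ?_ (by simp)
      (fun x y hx hy => by
        show tau k V (x + y) ∈ D
        rw [map_add]; exact add_mem hx hy)
    rintro ⟨⟨a, b⟩, hab⟩ x hx
    induction hx using Submodule.span_induction with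
    | mem z hz =>
      obtain ⟨p, hp, q, hq, rfl⟩ := hz
      rw [tau_tmul]
      exact Submodule.mem_iSup_of_mem ⟨(b, a), hab.symm⟩ (tmul_mem_tmulSub hq hp)
    | zero => rw [map_zero]; exact Submodule.zero_mem _
    | add x y _ _ hx hy => rw [map_add]; exact add_mem hx hy
    | smul c x _ hx => rw [map_smul]; exact Submodule.smul_mem _ _ hx
  have htauM : ∀ v ∈ M, tau k V v ∈ M := by
    intro v hv
    refine Submodule.iSup_induction _ (motive := fun v => tau k V v ∈ M) hv ?_ (by simp)
      (fun x y hx hy => by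
        show tau k V (x + y) ∈ M
        rw [map_add]; exact add_mem hx hy)
    rintro ⟨⟨a, b⟩, hab⟩ x hx
    induction hx using Submodule.span_induction with
    | mem z hz =>
      obtain ⟨p, hp, q, hq, rfl⟩ := hz
      rw [tau_tmul]
      exact Submodule.mem_iSup_of_mem ⟨(b, a), fun hr => hab hr.symm⟩ (tmul_mem_tmulSub hq hp)
    | zero => rw [map_zero]; exact Submodule.zero_mem _
    | add x y _ _ hx hy => rw [map_add]; exact add_mem hx hy
    | smul c x _ hx => rw [map_smul]; exact Submodule.smul_mem _ _ hx
  -- D and M are G-invariant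
  have hDsub : IsSubrep (ρ.tprod ρ) D := by
    intro g v hv
    refine Submodule.iSup_induction _ (motive := fun v => (ρ.tprod ρ) g v ∈ D) hv ?_ (by simp)
      (fun x y hx hy => by
        show (ρ.tprod ρ) g (x + y) ∈ D
        rw [map_add]; exact add_mem hx hy)
    rintro ⟨⟨a, b⟩, hab⟩ x hx
    induction hx using Submodule.span_induction with
    | mem z hz =>
      obtain ⟨p, hp, q, hq, rfl⟩ := hz
      rw [tprod_apply_tmul]
      have hsubD : tmulSub (Submodule.map (ρ g) (X a)) (Submodule.map (ρ g) (X b)) ≤ D := by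
        refine tmulSub_le_of_le_iSup
          (hpcont _ (map_rho_isSubrep ρ hH (hXsub a) g) (map_rho_subIrred ρ hH (hXirr a) g))
          (hpcont _ (map_rho_isSubrep ρ hH (hXsub b) g) (map_rho_subIrred ρ hH (hXirr b) g))
          ?_
        rintro ⟨i, hi⟩ ⟨j, hj⟩
        have hrel : RepIso (subRep σ (X i) (hXsub i)) (subRep σ (X j) (hXsub j)) :=
          hi.symm.trans (((repIso_map_rho ρ hH (hXsub a) (hXsub b) hab g)).trans hj)
        exact le_iSup (fun p : {p : Fin n × Fin n //
          RepIso (subRep σ (X p.1) (hXsub p.1)) (subRep σ (X p.2) (hXsub p.2))} =>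
          tmulSub (X p.1.1) (X p.1.2)) ⟨(i, j), hrel⟩
      exact hsubD (tmul_mem_tmulSub (Submodule.mem_map_of_mem hp) (Submodule.mem_map_of_mem hq))
    | zero => rw [map_zero]; exact Submodule.zero_mem _
    | add x y _ _ hx hy => rw [map_add]; exact add_mem hx hy
    | smul c x _ hx => rw [map_smul]; exact Submodule.smul_mem _ _ hx
  have hMsub : IsSubrep (ρ.tprod ρ) M := by
    intro g v hv
    refine Submodule.iSup_induction _ (motive := fun v => (ρ.tprod ρ) g v ∈ M) hv ?_ (by simp)
      (fun x y hx hy => by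
        show (ρ.tprod ρ) g (x + y) ∈ M
        rw [map_add]; exact add_mem hx hy)
    rintro ⟨⟨a, b⟩, hab⟩ x hx
    induction hx using Submodule.span_induction with
    | mem z hz =>
      obtain ⟨p, hp, q, hq, rfl⟩ := hz
      rw [tprod_apply_tmul]
      have hsubM : tmulSub (Submodule.map (ρ g) (X a)) (Submodule.map (ρ g) (X b)) ≤ M := by
        refine tmulSub_le_of_le_iSup
          (hpcont _ (map_rho_isSubrep ρ hH (hXsub a) g) (map_rho_subIrred ρ hH (hXirr a) g))
          (hpcont _ (map_rho_isSubrep ρ hH (hXsub b) g) (map_rho_subIrred ρ hH (hXirr b) g))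
          ?_
        rintro ⟨i, hi⟩ ⟨j, hj⟩
        have hrel : ¬ RepIso (subRep σ (X i) (hXsub i)) (subRep σ (X j) (hXsub j)) := by
          intro hr
          have : RepIso (subRep σ (Submodule.map (ρ g) (X a))
              (map_rho_isSubrep ρ hH (hXsub a) g))
              (subRep σ (Submodule.map (ρ g) (X b)) (map_rho_isSubrep ρ hH (hXsub b) g)) :=
            hi.trans (hr.trans hj.symm)
          exact hab (repIso_of_map_rho ρ hH (hXsub a) (hXsub b) g _ _ this)
        exact le_iSup (fun p : {p : Fin n × Fin n //
          ¬ RepIso (subRep σ (X p.1) (hXsub p.1)) (subRep σ (X p.2) (hXsub p.2))} =>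
          tmulSub (X p.1.1) (X p.1.2)) ⟨(i, j), hrel⟩
      exact hsubM (tmul_mem_tmulSub (Submodule.mem_map_of_mem hp) (Submodule.mem_map_of_mem hq))
    | zero => rw [map_zero]; exact Submodule.zero_mem _
    | add x y _ _ hx hy => rw [map_add]; exact add_mem hx hy
    | smul c x _ hx => rw [map_smul]; exact Submodule.smul_mem _ _ hx
  -- A and B
  have hTsub : IsSubrep (ρ.tprod ρ) (Tsq k V ε) := isSubrep_Tsq ρ ε
  set A : Submodule k (V ⊗[k] V) := Tsq k V ε ⊓ D with hAdef
  set B : Submodule k (V ⊗[k] V) := Tsq k V ε ⊓ M with hBdef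
  have hAsub : IsSubrep (ρ.tprod ρ) A := isSubrep_inf _ hTsub hDsub
  have hBsub : IsSubrep (ρ.tprod ρ) B := isSubrep_inf _ hTsub hMsub
  have hABdisj : A ⊓ B = ⊥ := by
    rw [← le_bot_iff, ← hDMbot]
    intro v hv
    exact ⟨hv.1.2, hv.2.2⟩
  -- the D- and M-membership criteria
  have hWD : ∀ (P Q : Submodule k V) (hPs : IsSubrep σ P) (hQs : IsSubrep σ Q)
      (hPirr : SubIrred σ P) (hQirr : SubIrred σ Q),
      RepIso (subRep σ P hPs) (subRep σ Q hQs) → tmulSub P Q ≤ D := by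
    intro P Q hPs hQs hPirr hQirr hiso
    refine tmulSub_le_of_le_iSup (hpcont P hPs hPirr) (hpcont Q hQs hQirr) ?_
    rintro ⟨i, hi⟩ ⟨j, hj⟩
    exact le_iSup (fun p : {p : Fin n × Fin n //
      RepIso (subRep σ (X p.1) (hXsub p.1)) (subRep σ (X p.2) (hXsub p.2))} =>
      tmulSub (X p.1.1) (X p.1.2)) ⟨(i, j), hi.symm.trans (hiso.trans hj)⟩
  have hWM : ∀ (P Q : Submodule k V) (hPs : IsSubrep σ P) (hQs : IsSubrep σ Q)
      (hPirr : SubIrred σ P) (hQirr : SubIrred σ Q),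
      ¬ RepIso (subRep σ P hPs) (subRep σ Q hQs) → tmulSub P Q ≤ M := by
    intro P Q hPs hQs hPirr hQirr hniso
    refine tmulSub_le_of_le_iSup (hpcont P hPs hPirr) (hpcont Q hQs hQirr) ?_
    rintro ⟨i, hi⟩ ⟨j, hj⟩
    exact le_iSup (fun p : {p : Fin n × Fin n //
      ¬ RepIso (subRep σ (X p.1) (hXsub p.1)) (subRep σ (X p.2) (hXsub p.2))} =>
      tmulSub (X p.1.1) (X p.1.2)) ⟨(i, j), fun hr => hniso (hi.trans (hr.trans hj.symm))⟩
  -- A ⊔ B = Tsq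
  have hABsup : A ⊔ B = Tsq k V ε := by
    refine le_antisymm (sup_le inf_le_left inf_le_left) ?_
    intro v hv
    rcases Submodule.mem_sup.1 (hDMtop v) with ⟨d, hd, m, hm, hdm⟩
    have hτv : tau k V v = (ε : k) • v := (mem_Tsq_iff ε v).1 hv
    have hτdm : tau k V d + tau k V m = (ε : k) • d + (ε : k) • m := by
      rw [← map_add, hdm, hτv, ← hdm, smul_add]
    have h1 : tau k V d - (ε : k) • d = (ε : k) • m - tau k V m := by
      linear_combination (norm := module) hτdm
    have hDmem : tau k V d - (ε : k) • d ∈ D :=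
      Submodule.sub_mem _ (htauD d hd) (Submodule.smul_mem _ _ hd)
    have hMmem : tau k V d - (ε : k) • d ∈ M := by
      rw [h1]
      exact Submodule.sub_mem _ (Submodule.smul_mem _ _ hm) (htauM m hm)
    have hzero : tau k V d - (ε : k) • d = 0 := by
      have : tau k V d - (ε : k) • d ∈ D ⊓ M := ⟨hDmem, hMmem⟩
      rw [hDMbot] at this
      exact this
    have hτd : tau k V d = (ε : k) • d := by
      have := sub_eq_zero.1 hzero; exact this
    have hτm : tau k V m = (ε : k) • m := by
      rw [hτd] at h1
      have : (0 : V ⊗[k] V) = (ε : k) • m - tau k V m := by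
        rw [← h1]; abel
      have := sub_eq_zero.1 (by rw [← this] : (ε : k) • m - tau k V m = 0)
      exact this.symm
    rw [← hdm]
    exact Submodule.add_mem_sup ⟨(mem_Tsq_iff ε d).2 hτd, hd⟩ ⟨(mem_Tsq_iff ε m).2 hτm, hm⟩
  -- B is nonzero
  obtain ⟨w₁, hw₁mem, hw₁0⟩ := Submodule.exists_mem_ne_zero_of_ne_bot hW₁irr.1
  obtain ⟨w₂, hw₂mem, hw₂0⟩ := Submodule.exists_mem_ne_zero_of_ne_bot hW₂irr.1
  have hw12ind : LinearIndependent k ![w₁, w₂] :=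
    linearIndependent_pair_of_disjoint hW12 hw₁mem hw₂mem hw₁0 hw₂0
  obtain ⟨f, hf⟩ := exists_dual_family hw12ind
  have hf00 : f 0 w₁ = 1 := by simpa using hf 0 0
  have hf01 : f 0 w₂ = 0 := by simpa using hf 0 1
  have hf10 : f 1 w₁ = 0 := by simpa using hf 1 0
  have hf11 : f 1 w₂ = 1 := by simpa using hf 1 1
  have hTmem : ∀ x y : V, x ⊗ₜ[k] y + (ε : k) • (y ⊗ₜ[k] x) ∈ Tsq k V ε := by
    intro x y
    rw [mem_Tsq_iff, map_add, map_smul, tau_tmul, tau_tmul, smul_add, smul_smul, hee, one_smul]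
    abel
  set u : V ⊗[k] V := w₁ ⊗ₜ[k] w₂ + (ε : k) • (w₂ ⊗ₜ[k] w₁) with hudef
  have huM : u ∈ M := by
    refine add_mem ?_ (Submodule.smul_mem _ _ ?_)
    · exact hWM W₁ W₂ hW₁ hW₂ hW₁irr hW₂irr hnoniso (tmul_mem_tmulSub hw₁mem hw₂mem)
    · exact hWM W₂ W₁ hW₂ hW₁ hW₂irr hW₁irr (fun hr => hnoniso hr.symm)
        (tmul_mem_tmulSub hw₂mem hw₁mem)
  have huT : u ∈ Tsq k V ε := hTmem w₁ w₂
  have huφ : phi (f 0) (f 1) u = 1 := by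
    rw [hudef, map_add, map_smul, phi_tmul, phi_tmul, hf00, hf11, hf01, hf10]
    simp
  have hu0 : u ≠ 0 := by
    intro h
    rw [h, map_zero] at huφ
    exact zero_ne_one huφ
  have hBne : B ≠ ⊥ := by
    intro hB
    have : u ∈ B := ⟨huT, huM⟩
    rw [hB] at this
    exact hu0 this
  -- conclusion-1 from all blocks being lines
  have hconc1 : (∀ a, Module.finrank k (X a) = 1) →
      ∀ W : Submodule k V, IsSubrep σ W → SubIrred σ W → Module.finrank k W = 1 := by
    intro hall W hWs hWirr
    obtain ⟨a, hiso⟩ := hisoX W hWs hWirr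
    rw [hiso.finrank_eq]
    exact hall a
  rcases small_dichotomy ρ ε hsmall hAsub hBsub inf_le_left inf_le_left hABdisj hBne with
    hA | ⟨hA1, hAtriv⟩ | ⟨hB1, hBtriv⟩
  · -- Case 1 : A = ⊥
    have hAz : ∀ v : V ⊗[k] V, v ∈ Tsq k V ε → v ∈ D → v = 0 := by
      intro v h1 h2
      have : v ∈ A := ⟨h1, h2⟩
      rw [hA] at this
      exact this
    have hXaD : ∀ a : Fin n, tmulSub (X a) (X a) ≤ D :=
      fun a => hWD (X a) (X a) (hXsub a) (hXsub a) (hXirr a) (hXirr a) (RepIso.refl _)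
    obtain ⟨x₁, hx₁mem, hx₁0⟩ := Submodule.exists_mem_ne_zero_of_ne_bot (hXirr a₁).1
    -- ε = -1
    have hεm1 : ε = -1 := by
      rcases hε with rfl | rfl
      · exfalso
        have hxx : (x₁ ⊗ₜ[k] x₁ : V ⊗[k] V) = 0 := by
          apply hAz
          · rw [mem_Tsq_iff]
            simp
          · exact hXaD a₁ (tmul_mem_tmulSub hx₁mem hx₁mem)
        obtain ⟨f, hf⟩ := exists_dual_family (linearIndependent_single (k := k) hx₁0)
        have hfx : f 0 x₁ = 1 := by simpa using hf 0 0
        have : phi (f 0) (f 0) (x₁ ⊗ₜ[k] x₁) = 1 := by rw [phi_tmul, hfx, one_mul]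
        rw [hxx, map_zero] at this
        exact zero_ne_one this
      · rfl
    -- all blocks are lines
    have hall : ∀ a, Module.finrank k (X a) = 1 := by
      intro a
      have hpos : Module.finrank k (X a) ≠ 0 :=
        fun h => (hXirr a).1 (Submodule.finrank_eq_zero.1 h)
      by_contra hne
      have h2 : 2 ≤ Module.finrank k (X a) := by omega
      obtain ⟨x, y, hx, hy, hxy⟩ := exists_linearIndependent_pair_of_two_le_finrank h2
      have hu : (x ⊗ₜ[k] y + (ε : k) • (y ⊗ₜ[k] x) : V ⊗[k] V) = 0 := by
        apply hAz _ (hTmem x y)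
        exact add_mem (hXaD a (tmul_mem_tmulSub hx hy))
          (Submodule.smul_mem _ _ (hXaD a (tmul_mem_tmulSub hy hx)))
      obtain ⟨f, hf⟩ := exists_dual_family hxy
      have hf00 : f 0 x = 1 := by simpa using hf 0 0
      have hf01 : f 0 y = 0 := by simpa using hf 0 1
      have hf10 : f 1 x = 0 := by simpa using hf 1 0
      have hf11 : f 1 y = 1 := by simpa using hf 1 1
      have : phi (f 0) (f 1) (x ⊗ₜ[k] y + (ε : k) • (y ⊗ₜ[k] x)) = 1 := by
        rw [map_add, map_smul, phi_tmul, phi_tmul, hf00, hf11, hf01, hf10]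
        simp
      rw [hu, map_zero] at this
      exact zero_ne_one this
    refine ⟨hconc1 hall, ?_, Or.inl hεm1⟩
    -- weight spaces
    intro χ
    by_contra hw
    have h2 : 2 ≤ Module.finrank k (weightSpace ρ H χ) := by omega
    obtain ⟨v₁, v₂, hv₁mem, hv₂mem, hvind⟩ :=
      exists_linearIndependent_pair_of_two_le_finrank h2
    have hv₁0 : v₁ ≠ 0 := hvind.ne_zero 0
    have hv₂0 : v₂ ≠ 0 := by
      have := hvind.ne_zero 1
      simpa using this
    have hv₁w : ∀ h : ↥H, σ h v₁ = ((χ h : kˣ) : k) • v₁ := fun h => hv₁mem h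
    have hv₂w : ∀ h : ↥H, σ h v₂ = ((χ h : kˣ) : k) • v₂ := fun h => hv₂mem h
    have hs₁ : IsSubrep σ (Submodule.span k {v₁}) := isSubrep_span_weight hv₁w
    have hs₂ : IsSubrep σ (Submodule.span k {v₂}) := isSubrep_span_weight hv₂w
    have hiso12 : RepIso (subRep σ _ hs₁) (subRep σ _ hs₂) :=
      repIso_span_of_same_char hv₁0 hv₂0 hv₁w hv₂w hs₁ hs₂
    have huD : (v₁ ⊗ₜ[k] v₂ + (ε : k) • (v₂ ⊗ₜ[k] v₁) : V ⊗[k] V) ∈ D := by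
      refine add_mem ?_ (Submodule.smul_mem _ _ ?_)
      · exact hWD _ _ hs₁ hs₂ (subIrred_span hv₁0) (subIrred_span hv₂0) hiso12
          (tmul_mem_tmulSub (Submodule.mem_span_singleton_self v₁)
            (Submodule.mem_span_singleton_self v₂))
      · exact hWD _ _ hs₂ hs₁ (subIrred_span hv₂0) (subIrred_span hv₁0) hiso12.symm
          (tmul_mem_tmulSub (Submodule.mem_span_singleton_self v₂)
            (Submodule.mem_span_singleton_self v₁))
    have hu : (v₁ ⊗ₜ[k] v₂ + (ε : k) • (v₂ ⊗ₜ[k] v₁) : V ⊗[k] V) = 0 :=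
      hAz _ (hTmem v₁ v₂) huD
    obtain ⟨f, hf⟩ := exists_dual_family hvind
    have hf00 : f 0 v₁ = 1 := by simpa using hf 0 0
    have hf01 : f 0 v₂ = 0 := by simpa using hf 0 1
    have hf10 : f 1 v₁ = 0 := by simpa using hf 1 0
    have hf11 : f 1 v₂ = 1 := by simpa using hf 1 1
    have : phi (f 0) (f 1) (v₁ ⊗ₜ[k] v₂ + (ε : k) • (v₂ ⊗ₜ[k] v₁)) = 1 := by
      rw [map_add, map_smul, phi_tmul, phi_tmul, hf00, hf11, hf01, hf10]
      simp
    rw [hu, map_zero] at this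
    exact zero_ne_one this
  · -- Case 2 : A is a trivial line (contradiction)
    exfalso
    have hnz : ∀ a : Fin n, ∃ x ∈ X a, x ≠ 0 :=
      fun a => Submodule.exists_mem_ne_zero_of_ne_bot (hXirr a).1
    have hAne : A ≠ ⊥ := by
      intro h
      rw [h] at hA1
      rw [finrank_bot] at hA1
      exact zero_ne_one hA1
    have hXaD : ∀ a : Fin n, tmulSub (X a) (X a) ≤ D :=
      fun a => hWD (X a) (X a) (hXsub a) (hXsub a) (hXirr a) (hXirr a) (RepIso.refl _)
    obtain ⟨xa₁, hxa₁, hxa₁0⟩ := hnz a₁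
    obtain ⟨xa₂, hxa₂, hxa₂0⟩ := hnz a₂
    rcases hε with rfl | rfl
    · -- ε = 1
      have hind := linearIndependent_pair_of_disjoint (hXdisj a₁ a₂ ha12) hxa₁ hxa₂ hxa₁0 hxa₂0
      obtain ⟨f, hf⟩ := exists_dual_family hind
      have hf00 : f 0 xa₁ = 1 := by simpa using hf 0 0
      have hf01 : f 0 xa₂ = 0 := by simpa using hf 0 1
      have hf10 : f 1 xa₁ = 0 := by simpa using hf 1 0
      have hf11 : f 1 xa₂ = 1 := by simpa using hf 1 1
      have hu₁A : (xa₁ ⊗ₜ[k] xa₁ : V ⊗[k] V) ∈ A :=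
        ⟨(mem_Tsq_iff 1 _).2 (by simp), hXaD a₁ (tmul_mem_tmulSub hxa₁ hxa₁)⟩
      have hu₂A : (xa₂ ⊗ₜ[k] xa₂ : V ⊗[k] V) ∈ A :=
        ⟨(mem_Tsq_iff 1 _).2 (by simp), hXaD a₂ (tmul_mem_tmulSub hxa₂ hxa₂)⟩
      have hu₁0 : (xa₁ ⊗ₜ[k] xa₁ : V ⊗[k] V) ≠ 0 := by
        intro h
        have : phi (f 0) (f 0) (xa₁ ⊗ₜ[k] xa₁) = 1 := by rw [phi_tmul, hf00, one_mul]
        rw [h, map_zero] at this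
        exact zero_ne_one this
      obtain ⟨c, hc⟩ := exists_finrank_one_dim1 hA1 hu₁A hu₁0 hu₂A
      have h1 : phi (f 1) (f 1) (xa₂ ⊗ₜ[k] xa₂) = 1 := by rw [phi_tmul, hf11, one_mul]
      have h0 : phi (f 1) (f 1) (xa₁ ⊗ₜ[k] xa₁) = 0 := by rw [phi_tmul, hf10, zero_mul]
      rw [hc, map_smul, h0, smul_zero] at h1
      exact zero_ne_one h1
    · -- ε = -1
      set C : Set (Submodule k V) := {Y | ∃ (hYs : IsSubrep σ Y) (hYirr : SubIrred σ Y),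
        ∃ (Y' : Submodule k V) (hY's : IsSubrep σ Y') (hY'irr : SubIrred σ Y'),
          RepIso (subRep σ Y hYs) (subRep σ Y' hY's) ∧
          ((Y = Y' ∧ 2 ≤ Module.finrank k Y) ∨ Y ⊓ Y' = ⊥)} with hCdef
      have hCne : ∃ Y, Y ∈ C := by
        by_cases hex : ∃ a, 2 ≤ Module.finrank k (X a)
        · obtain ⟨a, ha⟩ := hex
          exact ⟨X a, hXsub a, hXirr a, X a, hXsub a, hXirr a, RepIso.refl _, Or.inl ⟨rfl, ha⟩⟩
        · push_neg at hex
          by_cases hrel : ∃ a b, a ≠ b ∧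
              RepIso (subRep σ (X a) (hXsub a)) (subRep σ (X b) (hXsub b))
          · obtain ⟨a, b, hab, hr⟩ := hrel
            exact ⟨X a, hXsub a, hXirr a, X b, hXsub b, hXirr b, hr, Or.inr (hXdisj a b hab)⟩
          · exfalso
            apply hAne
            push_neg at hrel
            have hτfix : ∀ v ∈ D, tau k V v = v := by
              intro v hv
              refine Submodule.iSup_induction _ (motive := fun v => tau k V v = v) hv ?_ (map_zero _)
                (fun x y hx hy => by
                  show tau k V (x + y) = x + y
                  rw [map_add, hx, hy])
              rintro ⟨⟨a, b⟩, hab⟩ x hx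
              have haeqb : a = b := by
                by_contra hne
                exact hrel a b hne hab
              subst haeqb
              obtain ⟨xa, hxa, hxa0⟩ := hnz a
              have h1a : Module.finrank k (X a) = 1 := by
                have hpos : Module.finrank k (X a) ≠ 0 :=
                  fun h => (hXirr a).1 (Submodule.finrank_eq_zero.1 h)
                have := hex a
                omega
              have hsp : Submodule.span k {xa} = X a := by
                refine Submodule.eq_of_le_of_finrank_le
                  ((Submodule.span_singleton_le_iff_mem xa _).2 hxa) ?_
                rw [h1a, finrank_span_singleton hxa0]
              have e1 : ∀ (c c' : k), (c • xa) ⊗ₜ[k] (c' • xa) = (c * c') • (xa ⊗ₜ[k] xa) := by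
                intro c c'
                rw [TensorProduct.tmul_smul, ← TensorProduct.smul_tmul', smul_smul, mul_comm]
              induction hx using Submodule.span_induction with
              | mem z hz =>
                obtain ⟨p, hp, q, hq, rfl⟩ := hz
                rw [← hsp] at hp hq
                obtain ⟨cp, rfl⟩ := Submodule.mem_span_singleton.1 hp
                obtain ⟨cq, rfl⟩ := Submodule.mem_span_singleton.1 hq
                rw [tau_tmul, e1, e1, mul_comm]
              | zero => rw [map_zero]
              | add x y _ _ hx hy => rw [map_add, hx, hy]
              | smul c x _ hx => rw [map_smul, hx]
            rw [← le_bot_iff]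
            intro v hv
            have h1 : tau k V v = v := hτfix v hv.2
            have h2 : tau k V v = ((-1 : ℤ) : k) • v := (mem_Tsq_iff _ v).1 hv.1
            rw [h1, Int.cast_neg, Int.cast_one, neg_smul, one_smul] at h2
            have h3 : (2 : k) • v = 0 := by
              linear_combination (norm := module) h2
            rcases smul_eq_zero.1 h3 with h | h
            · exact absurd h two_ne_zero
            · simp [h]
      obtain ⟨Y0, hY0⟩ := hCne
      have hCinv : ∀ (g : G) (Y : Submodule k V), Y ∈ C → Submodule.map (ρ g) Y ∈ C := by
        rintro g Y ⟨hYs, hYirr, Y', hY's, hY'irr, hiso, hcase⟩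
        refine ⟨map_rho_isSubrep ρ hH hYs g, map_rho_subIrred ρ hH hYirr g,
          Submodule.map (ρ g) Y', map_rho_isSubrep ρ hH hY's g, map_rho_subIrred ρ hH hY'irr g,
          repIso_map_rho ρ hH hYs hY's hiso g, ?_⟩
        rcases hcase with ⟨hYY', hdim⟩ | hdisjYY
        · left
          subst hYY'
          refine ⟨rfl, ?_⟩
          rw [← (Submodule.equivMapOfInjective (ρ g) (rho_injective ρ g) Y).finrank_eq]
          exact hdim
        · right
          rw [← le_bot_iff]
          rintro v ⟨⟨y, hy, rfl⟩, hv2⟩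
          obtain ⟨y', hy', hyy'⟩ := hv2
          have hyY' : y ∈ Y' := by
            rw [← rho_injective ρ g hyy']
            exact hy'
          have : y ∈ Y ⊓ Y' := ⟨hy, hyY'⟩
          rw [hdisjYY] at this
          rw [(Submodule.mem_bot k).1 this, map_zero]
          exact Submodule.zero_mem _
      have hsSup_top : sSup C = ⊤ := by
        have hsub : IsSubrep ρ (sSup C) := by
          intro g v hv
          rw [sSup_eq_iSup'] at hv ⊢
          refine Submodule.iSup_induction _
            (motive := fun v => ρ g v ∈ ⨆ Y : C, (Y : Submodule k V)) hv ?_ (by simp)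
            (fun x y hx hy => by
              show ρ g (x + y) ∈ _
              rw [map_add]; exact add_mem hx hy)
          rintro ⟨Y, hY⟩ x hx
          exact Submodule.mem_iSup_of_mem ⟨_, hCinv g Y hY⟩ (Submodule.mem_map_of_mem hx)
        rcases hirr.2 _ hsub with h | h
        · exfalso
          have hle0 : Y0 ≤ sSup C := le_sSup hY0
          rw [h] at hle0
          obtain ⟨hY0s, hY0irr, -⟩ := hY0
          exact hY0irr.1 (le_bot_iff.1 hle0)
        · exact h
      have hApair : ∀ (i : Fin n) (Y : Submodule k V), Y ∈ C →
          ∀ (hYs₀ : IsSubrep σ Y),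
          RepIso (subRep σ (X i) (hXsub i)) (subRep σ Y hYs₀) →
          ∃ y₁ y₂ : V, LinearIndependent k ![y₁, y₂] ∧
            y₁ ∈ cS (fun j => RepIso (subRep σ (X i) (hXsub i)) (subRep σ (X j) (hXsub j))) ∧
            y₂ ∈ cS (fun j => RepIso (subRep σ (X i) (hXsub i)) (subRep σ (X j) (hXsub j))) ∧
            (y₁ ⊗ₜ[k] y₂ + ((-1 : ℤ) : k) • (y₂ ⊗ₜ[k] y₁)) ∈ A := by
        rintro i Y ⟨hYs, hYirr, Y', hY's, hY'irr, hisoYY', hcase⟩ hYs₀ hiso₀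
        have hiso₁ : RepIso (subRep σ (X i) (hXsub i)) (subRep σ Y hYs) := hiso₀
        have hclassY : ∀ (Z : Submodule k V) (hZs : IsSubrep σ Z) (hZirr : SubIrred σ Z),
            RepIso (subRep σ (X i) (hXsub i)) (subRep σ Z hZs) →
            Z ≤ cS (fun j => RepIso (subRep σ (X i) (hXsub i)) (subRep σ (X j) (hXsub j))) := by
          intro Z hZs hZirr hisoZ
          refine le_trans (hpcont Z hZs hZirr) ?_
          refine iSup_le ?_
          rintro ⟨j, hj⟩
          exact le_iSup (fun j : {j : Fin n //
            RepIso (subRep σ (X i) (hXsub i)) (subRep σ (X j) (hXsub j))} => X j.1)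
            ⟨j, hisoZ.trans hj⟩
        rcases hcase with ⟨hYY', hdim⟩ | hdisjYY'
        · subst hYY'
          obtain ⟨y₁, y₂, hy₁, hy₂, hind⟩ := exists_linearIndependent_pair_of_two_le_finrank hdim
          refine ⟨y₁, y₂, hind, hclassY Y hYs hYirr hiso₁ hy₁, hclassY Y hYs hYirr hiso₁ hy₂, ?_⟩
          refine ⟨hTmem y₁ y₂, ?_⟩
          exact add_mem (hWD Y Y hYs hYs hYirr hYirr (RepIso.refl _) (tmul_mem_tmulSub hy₁ hy₂))
            (Submodule.smul_mem _ _
              (hWD Y Y hYs hYs hYirr hYirr (RepIso.refl _) (tmul_mem_tmulSub hy₂ hy₁)))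
        · obtain ⟨y₁, hy₁, hy₁0⟩ := Submodule.exists_mem_ne_zero_of_ne_bot hYirr.1
          obtain ⟨y₂, hy₂, hy₂0⟩ := Submodule.exists_mem_ne_zero_of_ne_bot hY'irr.1
          have hind := linearIndependent_pair_of_disjoint hdisjYY' hy₁ hy₂ hy₁0 hy₂0
          refine ⟨y₁, y₂, hind, hclassY Y hYs hYirr hiso₁ hy₁,
            hclassY Y' hY's hY'irr (hiso₁.trans hisoYY') hy₂, ?_⟩
          refine ⟨hTmem y₁ y₂, ?_⟩
          exact add_mem (hWD Y Y' hYs hY's hYirr hY'irr hisoYY' (tmul_mem_tmulSub hy₁ hy₂))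
            (Submodule.smul_mem _ _
              (hWD Y' Y hY's hYs hY'irr hYirr hisoYY'.symm (tmul_mem_tmulSub hy₂ hy₁)))
      have hfind : ∀ i : Fin n, ∃ (Y : Submodule k V) (_ : Y ∈ C) (hYs : IsSubrep σ Y),
          RepIso (subRep σ (X i) (hXsub i)) (subRep σ Y hYs) := by
        intro i
        have hle : X i ≤ sSup C := by rw [hsSup_top]; exact le_top
        have hfg : Submodule.FG (X i) := IsNoetherian.noetherian _
        have hcpt := (Submodule.fg_iff_compact _).1 hfg
        obtain ⟨t, htC, hlet⟩ := (CompleteLattice.isCompactElement_iff_exists_le_sSup_of_le_sSup _ _).1 hcpt C hle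
        have hle2 : X i ≤ listSup t.toList := by
          refine le_trans hlet ?_
          refine Finset.sup_le fun P hP => ?_
          exact le_listSup_of_mem (Finset.mem_toList.2 hP)
        have hprop : ∀ P ∈ t.toList, IsSubrep σ P ∧ SubIrred σ P := by
          intro P hP
          have hPC : P ∈ C := htC (Finset.mem_toList.1 hP)
          obtain ⟨h1, h2, -⟩ := hPC
          exact ⟨h1, h2⟩
        obtain ⟨P, hPt, hPs, hiso⟩ :=
          exists_repIso_of_le_listSup (hXsub i) (hXirr i) t.toList hprop hle2
        exact ⟨P, htC (Finset.mem_toList.1 hPt), hPs, hiso⟩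
      obtain ⟨Y₁, hY₁C, hY₁s, hiso₁'⟩ := hfind a₁
      obtain ⟨Y₂, hY₂C, hY₂s, hiso₂'⟩ := hfind a₂
      obtain ⟨y₁, y₂, hind12, hy₁c, hy₂c, huA⟩ := hApair a₁ Y₁ hY₁C hY₁s hiso₁'
      obtain ⟨y₃, y₄, hind34, hy₃c, hy₄c, hu'A⟩ := hApair a₂ Y₂ hY₂C hY₂s hiso₂'
      have hdisjc : cS (fun j => RepIso (subRep σ (X a₁) (hXsub a₁)) (subRep σ (X j) (hXsub j))) ⊓
          cS (fun j => RepIso (subRep σ (X a₂) (hXsub a₂)) (subRep σ (X j) (hXsub j))) = ⊥ :=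
        hclass_disj _ _ (fun j h1 h2 => hR12 (h1.trans h2.symm))
      have hind4 := linearIndependent_four_of_disjoint hdisjc hy₁c hy₂c hy₃c hy₄c hind12 hind34
      obtain ⟨f, hf⟩ := exists_dual_family hind4
      have hf00 : f 0 y₁ = 1 := by simpa using hf 0 0
      have hf01 : f 0 y₂ = 0 := by simpa using hf 0 1
      have hf10 : f 1 y₁ = 0 := by simpa using hf 1 0
      have hf11 : f 1 y₂ = 1 := by simpa using hf 1 1
      have hf20 : f 2 y₁ = 0 := by simpa using hf 2 0
      have hf21 : f 2 y₂ = 0 := by simpa using hf 2 1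
      have hf22 : f 2 y₃ = 1 := by simpa using hf 2 2
      have hf23 : f 2 y₄ = 0 := by simpa using hf 2 3
      have hf30 : f 3 y₁ = 0 := by simpa using hf 3 0
      have hf31 : f 3 y₂ = 0 := by simpa using hf 3 1
      have hf32 : f 3 y₃ = 0 := by simpa using hf 3 2
      have hf33 : f 3 y₄ = 1 := by simpa using hf 3 3
      have hu₁0 : (y₁ ⊗ₜ[k] y₂ + ((-1 : ℤ) : k) • (y₂ ⊗ₜ[k] y₁) : V ⊗[k] V) ≠ 0 := by
        intro h
        have : phi (f 0) (f 1) (y₁ ⊗ₜ[k] y₂ + ((-1 : ℤ) : k) • (y₂ ⊗ₜ[k] y₁)) = 1 := by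
          rw [map_add, map_smul, phi_tmul, phi_tmul, hf00, hf11, hf01, hf10]
          simp
        rw [h, map_zero] at this
        exact zero_ne_one this
      obtain ⟨c, hc⟩ := exists_finrank_one_dim1 hA1 huA hu₁0 hu'A
      have h1 : phi (f 2) (f 3) (y₃ ⊗ₜ[k] y₄ + ((-1 : ℤ) : k) • (y₄ ⊗ₜ[k] y₃)) = 1 := by
        rw [map_add, map_smul, phi_tmul, phi_tmul, hf22, hf33, hf23, hf32]
        simp
      have h0 : phi (f 2) (f 3) (y₁ ⊗ₜ[k] y₂ + ((-1 : ℤ) : k) • (y₂ ⊗ₜ[k] y₁)) = 0 := by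
        rw [map_add, map_smul, phi_tmul, phi_tmul, hf20, hf21]
        simp
      rw [hc, map_smul, h0, smul_zero] at h1
      exact zero_ne_one h1
  · -- Case 3 : B is a trivial line
    have hsupT : (⨆ a, X a) = ⊤ := by rw [hsupX, hTop]
    have hnz : ∀ a : Fin n, ∃ x ∈ X a, x ≠ 0 :=
      fun a => Submodule.exists_mem_ne_zero_of_ne_bot (hXirr a).1
    have hblk3 : ∀ (a b c : Fin n) (x y z : V), a ≠ b → a ≠ c → b ≠ c →
        x ∈ X a → y ∈ X b → z ∈ X c → x ≠ 0 → y ≠ 0 → z ≠ 0 →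
        LinearIndependent k ![x, y, z] := by
      intro a b c x y z hab hac hbc hx hy hz hx0 hy0 hz0
      rw [Fintype.linearIndependent_iff]
      intro g hg
      have hsum3 : g 0 • x + g 1 • y + g 2 • z = 0 := by
        rw [← hg]
        simp [Fin.sum_univ_three]
      have happ : ∀ (d : Fin n) (u : V), u ∈ X d →
          π d (g 0 • x + g 1 • y + g 2 • z) = 0 → True := fun _ _ _ _ => trivial
      have key : ∀ (d : Fin n) (i : Fin 3) (u : V), u ∈ X d → (∀ j : Fin 3, j ≠ i →
          π d (![x, y, z] j) = 0) → π d (![x, y, z] i) = ![x, y, z] i →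
          g i • (![x, y, z] i) = 0 := by
        intro d i u hu hkill' hid'
        have := congrArg (π d) hsum3
        rw [map_zero] at this
        have hexp : π d (g 0 • x + g 1 • y + g 2 • z) =
            g 0 • π d x + g 1 • π d y + g 2 • π d z := by
          rw [map_add, map_add, map_smul, map_smul, map_smul]
        rw [hexp] at this
        fin_cases i
        · have h1 : π d y = 0 := by simpa using hkill' 1 (by decide)
          have h2 : π d z = 0 := by simpa using hkill' 2 (by decide)
          have h0 : π d x = x := by simpa using hid'
          rw [h0, h1, h2, smul_zero, smul_zero, add_zero, add_zero] at this
          simpa using this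
        · have h1 : π d x = 0 := by simpa using hkill' 0 (by decide)
          have h2 : π d z = 0 := by simpa using hkill' 2 (by decide)
          have h0 : π d y = y := by simpa using hid'
          rw [h0, h1, h2, smul_zero, smul_zero, add_zero, zero_add] at this
          simpa using this
        · have h1 : π d x = 0 := by simpa using hkill' 0 (by decide)
          have h2 : π d y = 0 := by simpa using hkill' 1 (by decide)
          have h0 : π d z = z := by simpa using hid'
          rw [h0, h1, h2, smul_zero, smul_zero, zero_add, zero_add] at this
          simpa using this
      have hg0 : g 0 • x = 0 := by
        have := key a 0 x hx (fun j hj => by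
          fin_cases j
          · exact absurd rfl hj
          · exact hkill a b hab y hy
          · exact hkill a c hac z hz) (hid a x hx)
        simpa using this
      have hg1 : g 1 • y = 0 := by
        have := key b 1 y hy (fun j hj => by
          fin_cases j
          · exact hkill b a (Ne.symm hab) x hx
          · exact absurd rfl hj
          · exact hkill b c hbc z hz) (hid b y hy)
        simpa using this
      have hg2 : g 2 • z = 0 := by
        have := key c 2 z hz (fun j hj => by
          fin_cases j
          · exact hkill c a (Ne.symm hac) x hx
          · exact hkill c b (Ne.symm hbc) y hy
          · exact absurd rfl hj) (hid c z hz)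
        simpa using this
      intro i
      fin_cases i
      · rcases smul_eq_zero.1 hg0 with h | h
        · exact h
        · exact absurd h hx0
      · rcases smul_eq_zero.1 hg1 with h | h
        · exact h
        · exact absurd h hy0
      · rcases smul_eq_zero.1 hg2 with h | h
        · exact h
        · exact absurd h hz0
    have hXaM : ∀ a b : Fin n,
        ¬ RepIso (subRep σ (X a) (hXsub a)) (subRep σ (X b) (hXsub b)) →
        tmulSub (X a) (X b) ≤ M :=
      fun a b h => hWM (X a) (X b) (hXsub a) (hXsub b) (hXirr a) (hXirr b) h
    -- all blocks are lines
    have hall : ∀ a, Module.finrank k (X a) = 1 := by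
      intro a
      have hpos : Module.finrank k (X a) ≠ 0 :=
        fun h => (hXirr a).1 (Submodule.finrank_eq_zero.1 h)
      by_contra hne
      have h2 : 2 ≤ Module.finrank k (X a) := by omega
      obtain ⟨x, y, hx, hy, hxy⟩ := exists_linearIndependent_pair_of_two_le_finrank h2
      have hb : ∃ b, ¬ RepIso (subRep σ (X a) (hXsub a)) (subRep σ (X b) (hXsub b)) := by
        by_contra hc
        push_neg at hc
        exact hR12 ((hc a₁).symm.trans (hc a₂))
      obtain ⟨b, hnab⟩ := hb
      have hab : a ≠ b := by
        rintro rfl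
        exact hnab (RepIso.refl _)
      obtain ⟨w, hwmem, hw0⟩ := hnz b
      have hind := linearIndependent_triple_of_disjoint (hXdisj a b hab) hx hy hwmem hxy hw0
      obtain ⟨f, hf⟩ := exists_dual_family hind
      have hf00 : f 0 x = 1 := by simpa using hf 0 0
      have hf02 : f 0 w = 0 := by simpa using hf 0 2
      have hf10 : f 1 x = 0 := by simpa using hf 1 0
      have hf12 : f 1 w = 0 := by simpa using hf 1 2
      have hf20 : f 2 x = 0 := by simpa using hf 2 0
      have hf21 : f 2 y = 0 := by simpa using hf 2 1
      have hf22 : f 2 w = 1 := by simpa using hf 2 2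
      have hf01 : f 0 y = 0 := by simpa using hf 0 1
      have hf11 : f 1 y = 1 := by simpa using hf 1 1
      have hu₁B : (x ⊗ₜ[k] w + (ε : k) • (w ⊗ₜ[k] x) : V ⊗[k] V) ∈ B := by
        refine ⟨hTmem x w, ?_⟩
        exact add_mem (hXaM a b hnab (tmul_mem_tmulSub hx hwmem))
          (Submodule.smul_mem _ _ (hXaM b a (fun hr => hnab hr.symm)
            (tmul_mem_tmulSub hwmem hx)))
      have hu₂B : (y ⊗ₜ[k] w + (ε : k) • (w ⊗ₜ[k] y) : V ⊗[k] V) ∈ B := by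
        refine ⟨hTmem y w, ?_⟩
        exact add_mem (hXaM a b hnab (tmul_mem_tmulSub hy hwmem))
          (Submodule.smul_mem _ _ (hXaM b a (fun hr => hnab hr.symm)
            (tmul_mem_tmulSub hwmem hy)))
      have hu₁0 : (x ⊗ₜ[k] w + (ε : k) • (w ⊗ₜ[k] x) : V ⊗[k] V) ≠ 0 := by
        intro h
        have : phi (f 0) (f 2) (x ⊗ₜ[k] w + (ε : k) • (w ⊗ₜ[k] x)) = 1 := by
          rw [map_add, map_smul, phi_tmul, phi_tmul, hf00, hf22, hf02, hf20]
          simp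
        rw [h, map_zero] at this
        exact zero_ne_one this
      obtain ⟨c, hc⟩ := exists_finrank_one_dim1 hB1 hu₁B hu₁0 hu₂B
      have h1 : phi (f 1) (f 2) (y ⊗ₜ[k] w + (ε : k) • (w ⊗ₜ[k] y)) = 1 := by
        rw [map_add, map_smul, phi_tmul, phi_tmul, hf11, hf22, hf12, hf21]
        simp
      have h0 : phi (f 1) (f 2) (x ⊗ₜ[k] w + (ε : k) • (w ⊗ₜ[k] x)) = 0 := by
        rw [map_add, map_smul, phi_tmul, phi_tmul, hf10, hf12]
        simp
      rw [hc, map_smul, h0, smul_zero] at h1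
      exact zero_ne_one h1
    -- there are only two blocks
    have hgen : ∀ (c d e : Fin n), c ≠ d → c ≠ e → e ≠ d →
        ¬ RepIso (subRep σ (X c) (hXsub c)) (subRep σ (X d) (hXsub d)) →
        ¬ RepIso (subRep σ (X e) (hXsub e)) (subRep σ (X d) (hXsub d)) → False := by
      intro c d e hcd hce hed hncd hned
      obtain ⟨xc, hxc, hxc0⟩ := hnz c
      obtain ⟨xd, hxd, hxd0⟩ := hnz d
      obtain ⟨xe, hxe, hxe0⟩ := hnz e
      have hind := hblk3 c d e xc xd xe hcd hce (Ne.symm hed) hxc hxd hxe hxc0 hxd0 hxe0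
      obtain ⟨f, hf⟩ := exists_dual_family hind
      have hf00 : f 0 xc = 1 := by simpa using hf 0 0
      have hf01 : f 0 xd = 0 := by simpa using hf 0 1
      have hf02 : f 0 xe = 0 := by simpa using hf 0 2
      have hf10 : f 1 xc = 0 := by simpa using hf 1 0
      have hf11 : f 1 xd = 1 := by simpa using hf 1 1
      have hf12 : f 1 xe = 0 := by simpa using hf 1 2
      have hf20 : f 2 xc = 0 := by simpa using hf 2 0
      have hf21 : f 2 xd = 0 := by simpa using hf 2 1
      have hf22 : f 2 xe = 1 := by simpa using hf 2 2
      have hu₁B : (xc ⊗ₜ[k] xd + (ε : k) • (xd ⊗ₜ[k] xc) : V ⊗[k] V) ∈ B := by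
        refine ⟨hTmem xc xd, ?_⟩
        exact add_mem (hXaM c d hncd (tmul_mem_tmulSub hxc hxd))
          (Submodule.smul_mem _ _ (hXaM d c (fun hr => hncd hr.symm)
            (tmul_mem_tmulSub hxd hxc)))
      have hu₂B : (xe ⊗ₜ[k] xd + (ε : k) • (xd ⊗ₜ[k] xe) : V ⊗[k] V) ∈ B := by
        refine ⟨hTmem xe xd, ?_⟩
        exact add_mem (hXaM e d hned (tmul_mem_tmulSub hxe hxd))
          (Submodule.smul_mem _ _ (hXaM d e (fun hr => hned hr.symm)
            (tmul_mem_tmulSub hxd hxe)))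
      have hu₁0 : (xc ⊗ₜ[k] xd + (ε : k) • (xd ⊗ₜ[k] xc) : V ⊗[k] V) ≠ 0 := by
        intro h
        have : phi (f 0) (f 1) (xc ⊗ₜ[k] xd + (ε : k) • (xd ⊗ₜ[k] xc)) = 1 := by
          rw [map_add, map_smul, phi_tmul, phi_tmul, hf00, hf11, hf01, hf10]
          simp
        rw [h, map_zero] at this
        exact zero_ne_one this
      obtain ⟨cc, hcc⟩ := exists_finrank_one_dim1 hB1 hu₁B hu₁0 hu₂B
      have h1 : phi (f 2) (f 1) (xe ⊗ₜ[k] xd + (ε : k) • (xd ⊗ₜ[k] xe)) = 1 := by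
        rw [map_add, map_smul, phi_tmul, phi_tmul, hf22, hf11, hf21, hf12]
        simp
      have h0 : phi (f 2) (f 1) (xc ⊗ₜ[k] xd + (ε : k) • (xd ⊗ₜ[k] xc)) = 0 := by
        rw [map_add, map_smul, phi_tmul, phi_tmul, hf20, hf21]
        simp
      rw [hcc, map_smul, h0, smul_zero] at h1
      exact zero_ne_one h1
    have hall2 : ∀ c : Fin n, c = a₁ ∨ c = a₂ := by
      intro c
      by_contra hcc
      push_neg at hcc
      obtain ⟨hc1, hc2⟩ := hcc
      by_cases hrel1 : RepIso (subRep σ (X c) (hXsub c)) (subRep σ (X a₁) (hXsub a₁))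
      · have hnc2 : ¬ RepIso (subRep σ (X c) (hXsub c)) (subRep σ (X a₂) (hXsub a₂)) :=
          fun hr => hR12 (hrel1.symm.trans hr)
        exact hgen c a₂ a₁ hc2 hc1 ha12 hnc2 hR12
      · exact hgen c a₁ a₂ hc1 hc2 (Ne.symm ha12) hrel1 (fun hr => hR12 hr.symm)
    have hVle : (⊤ : Submodule k V) ≤ X a₁ ⊔ X a₂ := by
      rw [← hsupT]
      refine iSup_le fun a => ?_
      rcases hall2 a with rfl | rfl
      · exact le_sup_left
      · exact le_sup_right
    have hV2 : Module.finrank k V = 2 := by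
      have h1 := Submodule.finrank_sup_add_finrank_inf_eq (X a₁) (X a₂)
      rw [hXdisj a₁ a₂ ha12, le_antisymm le_top hVle] at h1
      rw [hall a₁, hall a₂, finrank_bot, finrank_top] at h1
      omega
    refine ⟨hconc1 hall, ?_, Or.inr hV2⟩
    -- weight spaces
    intro χ
    by_contra hw
    have h2 : 2 ≤ Module.finrank k (weightSpace ρ H χ) := by omega
    have hweq : Module.finrank k (weightSpace ρ H χ) = Module.finrank k V := by
      have hle := Submodule.finrank_le (weightSpace ρ H χ)
      omega
    have hwtop : weightSpace ρ H χ = ⊤ := Submodule.eq_top_of_finrank_eq hweq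
    obtain ⟨x₁, hx₁mem, hx₁0⟩ := hnz a₁
    obtain ⟨x₂, hx₂mem, hx₂0⟩ := hnz a₂
    have hx₁w : ∀ h : ↥H, σ h x₁ = ((χ h : kˣ) : k) • x₁ := by
      intro h
      have : x₁ ∈ weightSpace ρ H χ := by rw [hwtop]; trivial
      exact this h
    have hx₂w : ∀ h : ↥H, σ h x₂ = ((χ h : kˣ) : k) • x₂ := by
      intro h
      have : x₂ ∈ weightSpace ρ H χ := by rw [hwtop]; trivial
      exact this h
    have hs₁ : IsSubrep σ (Submodule.span k {x₁}) := isSubrep_span_weight hx₁w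
    have hs₂ : IsSubrep σ (Submodule.span k {x₂}) := isSubrep_span_weight hx₂w
    have hiso12 : RepIso (subRep σ _ hs₁) (subRep σ _ hs₂) :=
      repIso_span_of_same_char hx₁0 hx₂0 hx₁w hx₂w hs₁ hs₂
    have hsp₁ : Submodule.span k {x₁} = X a₁ := by
      refine Submodule.eq_of_le_of_finrank_le
        ((Submodule.span_singleton_le_iff_mem x₁ _).2 hx₁mem) ?_
      rw [hall a₁, finrank_span_singleton hx₁0]
    have hsp₂ : Submodule.span k {x₂} = X a₂ := by
      refine Submodule.eq_of_le_of_finrank_le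
        ((Submodule.span_singleton_le_iff_mem x₂ _).2 hx₂mem) ?_
      rw [hall a₂, finrank_span_singleton hx₂0]
    exact hR12 (repIso_congr₂ hsp₁ hsp₂ hs₁ (hXsub a₁) hs₂ (hXsub a₂) hiso12)


end SmallRep
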